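/- arXiv:1810.03757 — 4 statements merged into one kernel-verified Lean document; each statement's English description precedes it below -/
import Mathlib

section
/- Let f ∈ Hol(α) be a bounded α-Hölder potential with conformal measure ν, eigenvalue λ_f and Hölder eigenfunction h normalized so that ∫_X h dν = 1. Then sup_{μ ∈ M^a_σ(X)} [ h^v(μ) + μ(f) ] = log λ_f, and this supremum is attained by the countably additive Borel probability measure μ_f = h·dν (i.e. μ_f(A) = ∫_A h dν); in particular, f admits an equilibrium state whose Yosida–Hewitt decomposition has no purely finitely additive part. -/
open MeasureTheory Filter Topology BoundedContinuousFunction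

noncomputable section

variable {E : Type*} [MetricSpace E]

/-- The metric on the sequence space `X = E^ℕ`:
`d_X(x,y) = ∑_{n=1}^∞ 2⁻ⁿ · min(d_E(x_n,y_n), 1)`. -/
def dX (x y : ℕ → E) : ℝ :=
  ∑' n : ℕ, ((1 : ℝ) / 2) ^ (n + 1) * min (dist (x n) (y n)) 1

/-- The left shift `σ(x₁,x₂,x₃,…) = (x₂,x₃,…)`. -/
def shift (x : ℕ → E) : ℕ → E := fun n => x (n + 1)

theorem continuous_shift : Continuous (shift (E := E)) :=
  continuous_pi fun n => continuous_apply (n + 1)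

/-- Prepending one symbol: `ax = (a, x₁, x₂, …)`. -/
def cons (a : E) (x : ℕ → E) : ℕ → E := fun n => Nat.casesOn n a x

/-- Prepending a finite word `a = (a₁,…,a_n)`. -/
def prepend {n : ℕ} (a : Fin n → E) (x : ℕ → E) : ℕ → E :=
  fun k => if h : k < n then a ⟨k, h⟩ else x (k - n)

/-- Birkhoff sums `f_n = ∑_{k=0}^{n-1} f ∘ σᵏ`. -/
def birkhoff (f : (ℕ → E) → ℝ) (n : ℕ) (x : ℕ → E) : ℝ :=
  ∑ k ∈ Finset.range n, f (shift^[k] x)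

/-- Boundedness of a real-valued function on `X`. -/
def Bdd (g : (ℕ → E) → ℝ) : Prop := ∃ M : ℝ, ∀ x, |g x| ≤ M

/-- `g` is `α`-Hölder with constant `C` (w.r.t. the metric `dX`). -/
def HolderConst (α C : ℝ) (g : (ℕ → E) → ℝ) : Prop :=
  ∀ x y, |g x - g y| ≤ C * dX x y ^ α

/-- `g ∈ Hol(α)`: bounded, continuous and `α`-Hölder. -/
def MemHol (α : ℝ) (g : (ℕ → E) → ℝ) : Prop :=
  Continuous g ∧ Bdd g ∧ ∃ C : ℝ, HolderConst α C g

/-- `g ∈ C_b(X,ℝ)`: bounded and continuous. -/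
def MemCb (g : (ℕ → E) → ℝ) : Prop := Continuous g ∧ Bdd g

/-- The Hölder seminorm `D_α(g) = sup_{x ≠ y} |g x - g y| / d_X(x,y)^α`. -/
def Dalpha (α : ℝ) (g : (ℕ → E) → ℝ) : ℝ :=
  sSup {r : ℝ | ∃ x y : ℕ → E, x ≠ y ∧ r = |g x - g y| / dX x y ^ α}

/-- The supremum norm `‖g‖_∞`. -/
def supNorm (g : (ℕ → E) → ℝ) : ℝ := ⨆ x : ℕ → E, |g x|

/-- The Hölder norm `‖g‖_α = ‖g‖_∞ + D_α(g)`. -/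
def alphaNorm (α : ℝ) (g : (ℕ → E) → ℝ) : ℝ := supNorm g + Dalpha α g

variable [MeasurableSpace E] [BorelSpace E]

/-- The Ruelle transfer operator `L_f φ(x) = ∫_E e^{f(ax)} φ(ax) dp(a)`. -/
def ruelle (p : Measure E) (f φ : (ℕ → E) → ℝ) : (ℕ → E) → ℝ :=
  fun x => ∫ a, Real.exp (f (cons a x)) * φ (cons a x) ∂p

/-- The normalized operators `P^m_n(φ) = L_f^m(φ · L_f^n 1) / L_f^{m+n} 1`. -/
def Pmn (p : Measure E) (f : (ℕ → E) → ℝ) (m n : ℕ) (φ : (ℕ → E) → ℝ) : (ℕ → E) → ℝ :=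
  fun x => (ruelle p f)^[m] (fun y => φ y * (ruelle p f)^[n] (fun _ => 1) y) x /
    (ruelle p f)^[m + n] (fun _ => 1) x

/-- The equivalent bounded metric `d̄(x,y) = min{1, 4 C_f d_X(x,y)^α}`. -/
def dbar (Cf α : ℝ) (x y : ℕ → E) : ℝ := min 1 (4 * Cf * dX x y ^ α)

/-- The Wasserstein distance associated to `d̄`, via Kantorovich duality. -/
def wass (Cf α : ℝ) (μ₁ μ₂ : Measure (ℕ → E)) : ℝ :=
  sSup {r : ℝ | ∃ g : (ℕ → E) → ℝ,
    (∀ x y, |g x - g y| ≤ dbar Cf α x y) ∧ r = (∫ x, g x ∂μ₁) - ∫ x, g x ∂μ₂}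

/-- The shift as a continuous self-map of `X`. -/
def shiftCM : C(ℕ → E, ℕ → E) := ⟨shift, continuous_shift⟩

variable (E) in
/-- `M^a_1(X)`: the finitely additive probability functionals, i.e. the weak-* dual
elements `μ` of `C_b(X,ℝ)` with `μ(1) = 1` and `μ(g) ≥ 0` whenever `g ≥ 0`. -/
def Ma1 : Set (WeakDual ℝ ((ℕ → E) →ᵇ ℝ)) :=
  {μ | μ 1 = 1 ∧ ∀ g : (ℕ → E) →ᵇ ℝ, 0 ≤ g → 0 ≤ μ g}

variable (E) in
/-- `M^a_σ(X)`: the shift-invariant elements of `M^a_1(X)`. -/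
def Maσ : Set (WeakDual ℝ ((ℕ → E) →ᵇ ℝ)) :=
  {μ | μ ∈ Ma1 E ∧ ∀ g : (ℕ → E) →ᵇ ℝ, μ (g.compContinuous shiftCM) = μ g}

/-- `log λ_g = lim_{n→∞} (1/n) log (L_g^n 1)(x₀)`, which exists and is independent
of the choice of `x₀ ∈ X` for bounded Hölder `g`. -/
def logLambda [Nonempty E] (p : Measure E) (g : (ℕ → E) → ℝ) : ℝ :=
  limUnder atTop fun n : ℕ =>
    (1 / (n : ℝ)) * Real.log ((ruelle p g)^[n] (fun _ => 1) (Classical.arbitrary (ℕ → E)))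

/-- The variational entropy `h^v(μ) = inf { -μ(g) + log λ_g : g ∈ Hol(α) bounded }`,
with values in `ℝ ∪ {-∞}` (encoded in `EReal`). -/
def entropyV [Nonempty E] (p : Measure E) (α : ℝ) (μ : WeakDual ℝ ((ℕ → E) →ᵇ ℝ)) : EReal :=
  sInf {r : EReal | ∃ g : (ℕ → E) →ᵇ ℝ, (∃ C : ℝ, HolderConst α C ⇑g) ∧
    r = ((-(μ g) + logLambda p ⇑g : ℝ) : EReal)}

namespace S16

lemma summable_half : Summable (fun n : ℕ => ((1:ℝ)/2) ^ (n+1)) := by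
  refine ((summable_geometric_of_lt_one (by norm_num) (by norm_num : (1:ℝ)/2 < 1)).mul_left
    ((1:ℝ)/2)).congr fun n => by ring

lemma tsum_half : ∑' n : ℕ, ((1:ℝ)/2) ^ (n+1) = 1 := by
  have : ∑' n : ℕ, ((1:ℝ)/2) ^ (n+1) = ∑' n : ℕ, ((1:ℝ)/2) * ((1:ℝ)/2) ^ n :=
    tsum_congr fun n => by ring
  rw [this, tsum_mul_left, tsum_geometric_of_lt_one (by norm_num) (by norm_num)]
  norm_num

lemma summable_dXterm (x y : ℕ → E) :
    Summable (fun n : ℕ => ((1:ℝ)/2) ^ (n+1) * min (dist (x n) (y n)) 1) := by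
  refine Summable.of_nonneg_of_le (fun n => by positivity) (fun n => ?_) summable_half
  exact mul_le_of_le_one_right (by positivity) (min_le_right _ _)

lemma dX_nonneg (x y : ℕ → E) : 0 ≤ dX x y := tsum_nonneg fun n => by positivity

lemma dX_le_one (x y : ℕ → E) : dX x y ≤ 1 := by
  have := Summable.tsum_le_tsum (f := fun n : ℕ => ((1:ℝ)/2) ^ (n+1) * min (dist (x n) (y n)) 1)
    (fun n => mul_le_of_le_one_right (by positivity) (min_le_right _ _))
    (summable_dXterm x y) summable_half
  rw [tsum_half] at this; exact this

lemma dX_cons (a : E) (x y : ℕ → E) : dX (cons a x) (cons a y) = dX x y / 2 := by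
  unfold dX
  rw [Summable.tsum_eq_zero_add (summable_dXterm (cons a x) (cons a y))]
  have h0 : ((1:ℝ)/2) ^ (0+1) * min (dist (cons a x 0) (cons a y 0)) 1 = 0 := by
    simp [cons]
  rw [h0, zero_add]
  have h1 : ∀ n : ℕ, ((1:ℝ)/2) ^ (n+1+1) * min (dist (cons a x (n+1)) (cons a y (n+1))) 1
      = ((1:ℝ)/2) * (((1:ℝ)/2) ^ (n+1) * min (dist (x n) (y n)) 1) := by
    intro n; show ((1:ℝ)/2) ^ (n+1+1) * min (dist (x n) (y n)) 1 = _; ring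
  rw [tsum_congr h1, tsum_mul_left]
  ring



lemma continuous_cons : Continuous fun q : E × (ℕ → E) => cons q.1 q.2 := by
  refine continuous_pi fun n => ?_
  cases n with
  | zero => exact continuous_fst
  | succ n => exact (continuous_apply n).comp continuous_snd

lemma continuous_cons_left (x : ℕ → E) : Continuous fun a : E => cons a x :=
  continuous_cons.comp (continuous_id.prodMk continuous_const)

lemma continuous_cons_right (a : E) : Continuous fun x : ℕ → E => cons a x :=
  continuous_cons.comp (continuous_const.prodMk continuous_id)

lemma integrable_of_cb {Ω : Type*} [TopologicalSpace Ω] [MeasurableSpace Ω]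
    [OpensMeasurableSpace Ω] (μ : Measure Ω) [IsFiniteMeasure μ] {φ : Ω → ℝ}
    (hc : Continuous φ) {M : ℝ} (hb : ∀ x, |φ x| ≤ M) : Integrable φ μ :=
  ⟨hc.aestronglyMeasurable, HasFiniteIntegral.of_bounded (C := M)
    (ae_of_all _ fun x => by simpa [Real.norm_eq_abs] using hb x)⟩

variable (p : Measure E) [IsProbabilityMeasure p]

lemma memCb_const (c : ℝ) : MemCb (fun _ : ℕ → E => c) :=
  ⟨continuous_const, |c|, fun _ => le_refl _⟩

lemma memCb_mul {φ ψ : (ℕ → E) → ℝ} (hφ : MemCb φ) (hψ : MemCb ψ) :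
    MemCb (fun y => φ y * ψ y) := by
  obtain ⟨hφc, Mφ, hφb⟩ := hφ; obtain ⟨hψc, Mψ, hψb⟩ := hψ
  refine ⟨hφc.mul hψc, Mφ * Mψ, fun x => ?_⟩
  rw [abs_mul]
  exact mul_le_mul (hφb x) (hψb x) (abs_nonneg _) ((abs_nonneg _).trans (hφb x))

lemma memCb_add {φ ψ : (ℕ → E) → ℝ} (hφ : MemCb φ) (hψ : MemCb ψ) :
    MemCb (fun y => φ y + ψ y) := by
  obtain ⟨hφc, Mφ, hφb⟩ := hφ; obtain ⟨hψc, Mψ, hψb⟩ := hψ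
  exact ⟨hφc.add hψc, Mφ + Mψ, fun x => (abs_add_le _ _).trans (add_le_add (hφb x) (hψb x))⟩

lemma memCb_sub {φ ψ : (ℕ → E) → ℝ} (hφ : MemCb φ) (hψ : MemCb ψ) :
    MemCb (fun y => φ y - ψ y) := by
  obtain ⟨hφc, Mφ, hφb⟩ := hφ; obtain ⟨hψc, Mψ, hψb⟩ := hψ
  exact ⟨hφc.sub hψc, Mφ + Mψ, fun x => (abs_sub _ _).trans (add_le_add (hφb x) (hψb x))⟩

lemma memCb_const_mul {φ : (ℕ → E) → ℝ} (hφ : MemCb φ) (c : ℝ) :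
    MemCb (fun y => c * φ y) := memCb_mul (memCb_const c) hφ

lemma memCb_exp {φ : (ℕ → E) → ℝ} (hφ : MemCb φ) : MemCb (fun y => Real.exp (φ y)) := by
  obtain ⟨hφc, Mφ, hφb⟩ := hφ
  refine ⟨Real.continuous_exp.comp hφc, Real.exp Mφ, fun x => ?_⟩
  rw [abs_of_pos (Real.exp_pos _)]
  exact Real.exp_le_exp.2 ((le_abs_self _).trans (hφb x))

lemma memCb_kernel {f φ : (ℕ → E) → ℝ} (hf : MemCb f) (hφ : MemCb φ) :
    MemCb (fun y => Real.exp (f y) * φ y) := memCb_mul (memCb_exp hf) hφ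

lemma memCb_integrable_cons {φ : (ℕ → E) → ℝ} (hφ : MemCb φ) (x : ℕ → E) :
    Integrable (fun a => φ (cons a x)) p := by
  obtain ⟨hc, M, hb⟩ := hφ
  exact integrable_of_cb p (hc.comp (continuous_cons_left x)) (fun a => hb _)

lemma integrable_kernel {f φ : (ℕ → E) → ℝ} (hf : MemCb f) (hφ : MemCb φ) (x : ℕ → E) :
    Integrable (fun a => Real.exp (f (cons a x)) * φ (cons a x)) p :=
  memCb_integrable_cons p (memCb_kernel hf hφ) x

lemma ruelle_memCb {f φ : (ℕ → E) → ℝ} (hf : MemCb f) (hφ : MemCb φ) :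
    MemCb (ruelle p f φ) := by
  obtain ⟨M, hM⟩ := (memCb_kernel hf hφ).2
  constructor
  · refine continuous_of_dominated (bound := fun _ => M) ?_ ?_ (integrable_const M) ?_
    · intro x
      exact (((memCb_kernel hf hφ).1).comp (continuous_cons_left x)).aestronglyMeasurable
    · intro x
      exact ae_of_all _ fun a => by rw [Real.norm_eq_abs]; exact hM (cons a x)
    · exact ae_of_all _ fun a => ((memCb_kernel hf hφ).1).comp (continuous_cons_right a)
  · refine ⟨M, fun x => ?_⟩
    have := norm_integral_le_of_norm_le_const (μ := p)
      (f := fun a => Real.exp (f (cons a x)) * φ (cons a x)) (C := M)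
      (ae_of_all _ fun a => by rw [Real.norm_eq_abs]; exact hM (cons a x))
    simpa [ruelle, Real.norm_eq_abs, measure_univ] using this

lemma ruelle_mono {f φ ψ : (ℕ → E) → ℝ} (hf : MemCb f) (hφ : MemCb φ) (hψ : MemCb ψ)
    (hle : ∀ y, φ y ≤ ψ y) (x : ℕ → E) : ruelle p f φ x ≤ ruelle p f ψ x := by
  refine integral_mono (integrable_kernel p hf hφ x) (integrable_kernel p hf hψ x) fun a => ?_
  exact mul_le_mul_of_nonneg_left (hle _) (Real.exp_nonneg _)

lemma ruelle_const_mul (f φ : (ℕ → E) → ℝ) (c : ℝ) (x : ℕ → E) :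
    ruelle p f (fun y => c * φ y) x = c * ruelle p f φ x := by
  unfold ruelle
  rw [← integral_const_mul]
  exact integral_congr_ae (ae_of_all _ fun a => by ring)

lemma ruelle_add {f φ ψ : (ℕ → E) → ℝ} (hf : MemCb f) (hφ : MemCb φ) (hψ : MemCb ψ) (x : ℕ → E) :
    ruelle p f (fun y => φ y + ψ y) x = ruelle p f φ x + ruelle p f ψ x := by
  unfold ruelle
  rw [← integral_add (integrable_kernel p hf hφ x) (integrable_kernel p hf hψ x)]
  exact integral_congr_ae (ae_of_all _ fun a => by ring)

lemma ruelle_iter_memCb {f φ : (ℕ → E) → ℝ} (hf : MemCb f) (hφ : MemCb φ) (n : ℕ) :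
    MemCb ((ruelle p f)^[n] φ) := by
  induction n with
  | zero => exact hφ
  | succ n ih => rw [Function.iterate_succ_apply']; exact ruelle_memCb p hf ih

lemma ruelle_iter_mono {f φ ψ : (ℕ → E) → ℝ} (hf : MemCb f) (hφ : MemCb φ) (hψ : MemCb ψ)
    (hle : ∀ y, φ y ≤ ψ y) (n : ℕ) (x : ℕ → E) :
    (ruelle p f)^[n] φ x ≤ (ruelle p f)^[n] ψ x := by
  induction n generalizing x with
  | zero => exact hle x
  | succ n ih =>
    rw [Function.iterate_succ_apply', Function.iterate_succ_apply']
    exact ruelle_mono p hf (ruelle_iter_memCb p hf hφ n) (ruelle_iter_memCb p hf hψ n) ih x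

lemma ruelle_iter_const_mul (f φ : (ℕ → E) → ℝ) (c : ℝ) (n : ℕ) (x : ℕ → E) :
    (ruelle p f)^[n] (fun y => c * φ y) x = c * (ruelle p f)^[n] φ x := by
  induction n generalizing x with
  | zero => rfl
  | succ n ih =>
    rw [Function.iterate_succ_apply', Function.iterate_succ_apply']
    have : (ruelle p f)^[n] (fun y => c * φ y) = fun y => c * (ruelle p f)^[n] φ y :=
      funext fun y => ih y
    rw [this, ruelle_const_mul]

lemma ruelle_iter_one_lb {g : (ℕ → E) → ℝ} (hgc : Continuous g) {Mg : ℝ}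
    (hgb : ∀ x, |g x| ≤ Mg) (n : ℕ) (x : ℕ → E) :
    Real.exp (-(n * Mg)) ≤ (ruelle p g)^[n] (fun _ => 1) x := by
  have hg : MemCb g := ⟨hgc, Mg, hgb⟩
  induction n generalizing x with
  | zero => simp
  | succ n ih =>
    rw [Function.iterate_succ_apply']
    have hker := integrable_kernel p hg (ruelle_iter_memCb p hg (memCb_const 1) n) x
    have hpt : ∀ a : E, Real.exp (-Mg) * Real.exp (-(n * Mg)) ≤
        Real.exp (g (cons a x)) * (ruelle p g)^[n] (fun _ => 1) (cons a x) := by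
      intro a
      refine mul_le_mul ?_ (ih _) (Real.exp_nonneg _) (Real.exp_nonneg _)
      exact Real.exp_le_exp.2 (neg_le_of_abs_le (hgb _))
    calc Real.exp (-((n+1 : ℕ) * Mg))
        = ∫ _a : E, Real.exp (-Mg) * Real.exp (-(n * Mg)) ∂p := by
          rw [integral_const]; simp [measure_univ, ← Real.exp_add]; ring_nf
      _ ≤ ruelle p g ((ruelle p g)^[n] fun _ => 1) x :=
          integral_mono (integrable_const _) hker fun a => hpt a

lemma ruelle_iter_one_pos {g : (ℕ → E) → ℝ} (hgc : Continuous g) {Mg : ℝ}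
    (hgb : ∀ x, |g x| ≤ Mg) (n : ℕ) (x : ℕ → E) :
    0 < (ruelle p g)^[n] (fun _ => 1) x :=
  lt_of_lt_of_le (Real.exp_pos _) (ruelle_iter_one_lb p hgc hgb n x)


section Holder

variable {α Cg : ℝ} (hα : 0 < α) (hCg : 0 ≤ Cg) {g : (ℕ → E) → ℝ} (hg : MemCb g)
  (hHol : HolderConst α Cg g)

def qα (α : ℝ) : ℝ := ((1:ℝ)/2) ^ α

def Kq (α : ℝ) : ℝ := qα α / (1 - qα α)

lemma qα_pos : 0 < qα α := Real.rpow_pos_of_pos (by norm_num) _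

lemma qα_lt_one (hα : 0 < α) : qα α < 1 := Real.rpow_lt_one (by norm_num) (by norm_num) hα

lemma Kq_nonneg (hα : 0 < α) : 0 ≤ Kq α :=
  div_nonneg (qα_pos).le (by linarith [qα_lt_one hα])

lemma summable_qpow (hα : 0 < α) : Summable (fun j : ℕ => qα α ^ (j+1)) :=
  ((summable_geometric_of_lt_one (qα_pos).le (qα_lt_one hα)).mul_left (qα α)).congr
    fun n => by rw [pow_succ]; ring

lemma Sq_le_Kq (hα : 0 < α) (n : ℕ) : ∑ j ∈ Finset.range n, qα α ^ (j+1) ≤ Kq α := by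
  have h1 : ∑ j ∈ Finset.range n, qα α ^ (j+1) ≤ ∑' j : ℕ, qα α ^ (j+1) :=
    Summable.sum_le_tsum _ (fun j _ => pow_nonneg qα_pos.le _) (summable_qpow hα)
  have h2 : ∑' j : ℕ, qα α ^ (j+1) = Kq α := by
    have : ∑' j : ℕ, qα α ^ (j+1) = ∑' j : ℕ, qα α * qα α ^ j :=
      tsum_congr fun j => by rw [pow_succ]; ring
    rw [this, tsum_mul_left, tsum_geometric_of_lt_one (qα_pos).le (qα_lt_one hα), Kq,
      div_eq_mul_inv]
  exact h2 ▸ h1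

lemma Sq_nonneg (n : ℕ) : 0 ≤ ∑ j ∈ Finset.range n, qα α ^ (j+1) :=
  Finset.sum_nonneg fun j _ => pow_nonneg qα_pos.le _

include hα hCg hg hHol in
lemma ruelle_iter_one_holder (n : ℕ) (x y : ℕ → E) :
    (ruelle p g)^[n] (fun _ => 1) x ≤
      Real.exp (Cg * (∑ j ∈ Finset.range n, qα α ^ (j+1)) * dX x y ^ α) *
        (ruelle p g)^[n] (fun _ => 1) y := by
  obtain ⟨Mg, hMg⟩ := hg.2
  induction n generalizing x y with
  | zero => simp
  | succ n ih =>
    set q := qα α with hq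
    have hSsucc : ∑ j ∈ Finset.range (n+1), q ^ (j+1)
        = q + q * ∑ j ∈ Finset.range n, q ^ (j+1) := by
      rw [Finset.sum_range_succ' (fun j => q ^ (j+1)) n, Finset.mul_sum]
      simp only [pow_succ, pow_zero, one_mul]
      rw [add_comm]
      congr 1
      exact Finset.sum_congr rfl fun j _ => by ring
    rw [Function.iterate_succ_apply']
    have hiter := ruelle_iter_memCb p hg (memCb_const 1) n
    have hd : ∀ a : E, dX (cons a x) (cons a y) ^ α = dX x y ^ α * q := by
      intro a
      rw [dX_cons, div_eq_mul_inv, Real.mul_rpow (dX_nonneg x y) (by norm_num), hq, qα]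
      norm_num
    have hpt : ∀ a : E, Real.exp (g (cons a x)) * (ruelle p g)^[n] (fun _ => 1) (cons a x) ≤
        Real.exp (Cg * (∑ j ∈ Finset.range (n+1), q ^ (j+1)) * dX x y ^ α) *
          (Real.exp (g (cons a y)) * (ruelle p g)^[n] (fun _ => 1) (cons a y)) := by
      intro a
      have h1 : Real.exp (g (cons a x)) ≤
          Real.exp (Cg * q * dX x y ^ α) * Real.exp (g (cons a y)) := by
        rw [← Real.exp_add]
        refine Real.exp_le_exp.2 ?_
        have := (abs_le.1 (hHol (cons a x) (cons a y))).2
        rw [hd a] at this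
        nlinarith [this]
      have h2 : (ruelle p g)^[n] (fun _ => 1) (cons a x) ≤
          Real.exp (Cg * (∑ j ∈ Finset.range n, q ^ (j+1)) * (dX x y ^ α * q)) * (ruelle p g)^[n] (fun _ => 1) (cons a y) := by
        have := ih (cons a x) (cons a y)
        rwa [hd a] at this
      calc Real.exp (g (cons a x)) * (ruelle p g)^[n] (fun _ => 1) (cons a x)
          ≤ (Real.exp (Cg * q * dX x y ^ α) * Real.exp (g (cons a y))) *
            (Real.exp (Cg * (∑ j ∈ Finset.range n, q ^ (j+1)) * (dX x y ^ α * q)) *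
              (ruelle p g)^[n] (fun _ => 1) (cons a y)) := by
            refine mul_le_mul h1 h2 ?_ (by positivity)
            exact (ruelle_iter_one_pos p hg.1 hMg n _).le
        _ = (Real.exp (Cg * q * dX x y ^ α) * Real.exp (Cg * (∑ j ∈ Finset.range n, q ^ (j+1)) * (dX x y ^ α * q))) *
            (Real.exp (g (cons a y)) * (ruelle p g)^[n] (fun _ => 1) (cons a y)) := by ring
        _ = Real.exp (Cg * (∑ j ∈ Finset.range (n+1), q ^ (j+1)) * dX x y ^ α) *
            (Real.exp (g (cons a y)) * (ruelle p g)^[n] (fun _ => 1) (cons a y)) := by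
            rw [← Real.exp_add, hSsucc]; congr 2; ring
    calc ruelle p g ((ruelle p g)^[n] fun _ => 1) x
        = ∫ a, Real.exp (g (cons a x)) * (ruelle p g)^[n] (fun _ => 1) (cons a x) ∂p := rfl
      _ ≤ ∫ a, Real.exp (Cg * (∑ j ∈ Finset.range (n+1), q ^ (j+1)) * dX x y ^ α) *
            (Real.exp (g (cons a y)) * (ruelle p g)^[n] (fun _ => 1) (cons a y)) ∂p := by
          refine integral_mono (integrable_kernel p hg hiter x)
            ((integrable_kernel p hg hiter y).const_mul _) fun a => hpt a
      _ = Real.exp (Cg * (∑ j ∈ Finset.range (n+1), q ^ (j+1)) * dX x y ^ α) * ruelle p g ((ruelle p g)^[n] fun _ => 1) y := by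
          rw [integral_const_mul]; rfl

include hα hCg hg hHol in
lemma ruelle_iter_one_compare (n : ℕ) (x y : ℕ → E) :
    (ruelle p g)^[n] (fun _ => 1) x ≤
      Real.exp (Cg * Kq α) * (ruelle p g)^[n] (fun _ => 1) y := by
  obtain ⟨Mg, hMg⟩ := hg.2
  refine (ruelle_iter_one_holder p hα hCg hg hHol n x y).trans ?_
  refine mul_le_mul_of_nonneg_right (Real.exp_le_exp.2 ?_) (ruelle_iter_one_pos p hg.1 hMg n y).le
  have hd1 : dX x y ^ α ≤ 1 := Real.rpow_le_one (dX_nonneg x y) (dX_le_one x y) hα.le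
  have hd0 : (0:ℝ) ≤ dX x y ^ α := Real.rpow_nonneg (dX_nonneg x y) α
  have hS := Sq_le_Kq hα n
  have hS0 := Sq_nonneg (α := α) n
  nlinarith [mul_le_mul_of_nonneg_left hS hCg,
    mul_le_of_le_one_right (mul_nonneg hCg hS0) hd1]

end Holder

section Eigen

variable {f h : (ℕ → E) → ℝ} (hf : MemCb f) (hh : MemCb h)
  {lam c Ch : ℝ} (hlam : 0 < lam) (hc : 0 < c) (hhc : ∀ x, c ≤ h x) (hhC : ∀ x, h x ≤ Ch)
  (heig : ∀ x, ruelle p f h x = lam * h x)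

include hf hh hlam hc hhc hhC heig in
lemma ruelle_iter_one_eigen_bounds (n : ℕ) (x : ℕ → E) :
    lam ^ n * h x / Ch ≤ (ruelle p f)^[n] (fun _ => 1) x ∧
      (ruelle p f)^[n] (fun _ => 1) x ≤ lam ^ n * h x / c := by
  have hCh : 0 < Ch := hc.trans_le ((hhc x).trans (hhC x))
  induction n generalizing x with
  | zero =>
    constructor
    · simpa using (div_le_one hCh).2 (hhC x)
    · simpa using (one_le_div hc).2 (hhc x)
  | succ n ih =>
    have hiter := ruelle_iter_memCb p hf (memCb_const 1) n
    have hlow : MemCb (fun y => lam ^ n / Ch * h y) := memCb_const_mul hh _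
    have hhigh : MemCb (fun y => lam ^ n / c * h y) := memCb_const_mul hh _
    rw [Function.iterate_succ_apply']
    constructor
    · have := ruelle_mono p hf hlow hiter
        (fun y => by
          have h1 := (ih y).1
          have h2 : lam ^ n / Ch * h y = lam ^ n * h y / Ch := by ring
          linarith) x
      have heq : ruelle p f (fun y => lam ^ n / Ch * h y) x = lam ^ (n+1) * h x / Ch := by
        rw [ruelle_const_mul, heig x, pow_succ]; ring
      linarith [heq ▸ this]
    · have := ruelle_mono p hf hiter hhigh
        (fun y => by
          have h1 := (ih y).2
          have h2 : lam ^ n / c * h y = lam ^ n * h y / c := by ring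
          linarith) x
      have heq : ruelle p f (fun y => lam ^ n / c * h y) x = lam ^ (n+1) * h x / c := by
        rw [ruelle_const_mul, heig x, pow_succ]; ring
      linarith [heq ▸ this]

include hf hh hlam hc hhc hhC heig in
lemma tendsto_log_ruelle_iter_eigen (x₀ : ℕ → E) :
    Tendsto (fun n : ℕ => (1 / (n:ℝ)) * Real.log ((ruelle p f)^[n] (fun _ => 1) x₀))
      atTop (𝓝 (Real.log lam)) := by
  have hCh : 0 < Ch := hc.trans_le ((hhc x₀).trans (hhC x₀))
  have hb := fun n => ruelle_iter_one_eigen_bounds p hf hh hlam hc hhc hhC heig n x₀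
  have hlo : ∀ n : ℕ, lam ^ n * (c / Ch) ≤ (ruelle p f)^[n] (fun _ => 1) x₀ := by
    intro n
    have h1 : c / Ch ≤ h x₀ / Ch := by gcongr; exact hhc x₀
    calc lam ^ n * (c / Ch) ≤ lam ^ n * (h x₀ / Ch) :=
          mul_le_mul_of_nonneg_left h1 (pow_pos hlam n).le
      _ = lam ^ n * h x₀ / Ch := by ring
      _ ≤ _ := (hb n).1
  have hhi : ∀ n : ℕ, (ruelle p f)^[n] (fun _ => 1) x₀ ≤ lam ^ n * (Ch / c) := by
    intro n
    have h1 : h x₀ / c ≤ Ch / c := by gcongr; exact hhC x₀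
    refine (hb n).2.trans ?_
    calc lam ^ n * h x₀ / c = lam ^ n * (h x₀ / c) := by ring
      _ ≤ lam ^ n * (Ch / c) := mul_le_mul_of_nonneg_left h1 (pow_pos hlam n).le
  have hpos : ∀ n : ℕ, 0 < (ruelle p f)^[n] (fun _ => 1) x₀ := fun n =>
    lt_of_lt_of_le (by positivity) (hlo n)
  have hlog : ∀ n : ℕ, (n:ℝ) * Real.log lam + Real.log (c / Ch) ≤
      Real.log ((ruelle p f)^[n] (fun _ => 1) x₀) ∧
      Real.log ((ruelle p f)^[n] (fun _ => 1) x₀) ≤ (n:ℝ) * Real.log lam + Real.log (Ch / c) := by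
    intro n
    constructor
    · have := Real.log_le_log (by positivity) (hlo n)
      rwa [Real.log_mul (by positivity) (by positivity), Real.log_pow] at this
    · have := Real.log_le_log (hpos n) (hhi n)
      rwa [Real.log_mul (by positivity) (by positivity), Real.log_pow] at this
  have hA : Tendsto (fun n : ℕ => Real.log lam + Real.log (c / Ch) / n) atTop
      (𝓝 (Real.log lam)) := by
    have h0 := tendsto_const_div_atTop_nhds_zero_nat (Real.log (c / Ch))
    simpa using h0.const_add (Real.log lam)
  have hB : Tendsto (fun n : ℕ => Real.log lam + Real.log (Ch / c) / n) atTop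
      (𝓝 (Real.log lam)) := by
    have h0 := tendsto_const_div_atTop_nhds_zero_nat (Real.log (Ch / c))
    simpa using h0.const_add (Real.log lam)
  refine tendsto_of_tendsto_of_tendsto_of_le_of_le' hA hB ?_ ?_
  · filter_upwards [eventually_ge_atTop 1] with n hn
    have hn' : (0:ℝ) < n := by exact_mod_cast hn
    rw [← sub_nonneg]
    have heq : (1 / (n:ℝ)) * Real.log ((ruelle p f)^[n] (fun _ => 1) x₀) -
        (Real.log lam + Real.log (c / Ch) / n) =
        (1 / (n:ℝ)) * (Real.log ((ruelle p f)^[n] (fun _ => 1) x₀) -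
          ((n:ℝ) * Real.log lam + Real.log (c / Ch))) := by
      field_simp
    rw [heq]
    exact mul_nonneg (by positivity) (by linarith [(hlog n).1])
  · filter_upwards [eventually_ge_atTop 1] with n hn
    have hn' : (0:ℝ) < n := by exact_mod_cast hn
    rw [← sub_nonneg]
    have heq : (Real.log lam + Real.log (Ch / c) / n) -
        (1 / (n:ℝ)) * Real.log ((ruelle p f)^[n] (fun _ => 1) x₀) =
        (1 / (n:ℝ)) * (((n:ℝ) * Real.log lam + Real.log (Ch / c)) -
          Real.log ((ruelle p f)^[n] (fun _ => 1) x₀)) := by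
      field_simp
    rw [heq]
    exact mul_nonneg (by positivity) (by linarith [(hlog n).2])

end Eigen

section Fekete

variable {α Cg Mg : ℝ} {g : (ℕ → E) → ℝ} (hα : 0 < α) (hCg : 0 ≤ Cg) (hg : MemCb g)
  (hHol : HolderConst α Cg g) (hgb : ∀ x, |g x| ≤ Mg)

include hα hCg hg hHol hgb in
lemma exists_tendsto_log_ruelle (x₀ : ℕ → E) :
    ∃ ℓ : ℝ, Tendsto (fun n : ℕ => (1 / (n:ℝ)) *
      Real.log ((ruelle p g)^[n] (fun _ => 1) x₀)) atTop (𝓝 ℓ) := by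
  have hMg : 0 ≤ Mg := (abs_nonneg _).trans (hgb x₀)
  have hK : 0 ≤ Cg * Kq α := mul_nonneg hCg (Kq_nonneg hα)
  set L : ℕ → ℝ := fun n => (ruelle p g)^[n] (fun _ => 1) x₀ with hL
  have hpos : ∀ n (x : ℕ → E), 0 < (ruelle p g)^[n] (fun _ => 1) x := fun n x =>
    ruelle_iter_one_pos p hg.1 hgb n x
  set u : ℕ → ℝ := fun n => Real.log (L n) + Cg * Kq α with hu
  have husub : Subadditive u := by
    intro m n
    have hsplit : L (m + n) = (ruelle p g)^[m] ((ruelle p g)^[n] (fun _ => 1)) x₀ := by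
      rw [hL]; simp only []; rw [Function.iterate_add_apply]
    have hcomp : ∀ y, (ruelle p g)^[n] (fun _ => 1) y ≤
        (Real.exp (Cg * Kq α) * L n) * (fun _ : ℕ → E => (1:ℝ)) y := by
      intro y
      simpa using ruelle_iter_one_compare p hα hCg hg hHol n y x₀
    have hmono := ruelle_iter_mono p hg (ruelle_iter_memCb p hg (memCb_const 1) n)
      (memCb_const_mul (memCb_const 1) ((Real.exp (Cg * Kq α) * L n))) hcomp m x₀
    rw [ruelle_iter_const_mul] at hmono
    have hLmn : L (m+n) ≤ Real.exp (Cg * Kq α) * L n * L m := by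
      rw [hsplit]; exact hmono
    have h1 : Real.log (L (m+n)) ≤ Cg * Kq α + Real.log (L n) + Real.log (L m) := by
      have := Real.log_le_log (hpos (m+n) x₀) hLmn
      rwa [Real.log_mul (mul_pos (Real.exp_pos _) (hpos n x₀)).ne' (hpos m x₀).ne',
        Real.log_mul (Real.exp_pos _).ne' (hpos n x₀).ne', Real.log_exp] at this
    simp only [hu]
    linarith
  have hbdd : BddBelow (Set.range fun n : ℕ => u n / n) := by
    refine ⟨-Mg, ?_⟩
    rintro r ⟨n, rfl⟩
    rcases Nat.eq_zero_or_pos n with hn | hn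
    · subst hn; simp [hu]; linarith
    · have hn' : (0:ℝ) < n := by exact_mod_cast hn
      have h1 : -((n:ℝ) * Mg) ≤ Real.log (L n) := by
        have := Real.log_le_log (Real.exp_pos _) (ruelle_iter_one_lb p hg.1 hgb n x₀)
        rwa [Real.log_exp] at this
      have h2 : -((n:ℝ) * Mg) ≤ u n := by simp only [hu]; linarith
      rw [le_div_iff₀ hn']
      calc -Mg * (n:ℝ) = -((n:ℝ) * Mg) := by ring
        _ ≤ u n := h2
  refine ⟨husub.lim - 0, ?_⟩
  have htend := (husub.tendsto_lim hbdd).sub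
    (tendsto_const_div_atTop_nhds_zero_nat (Cg * Kq α))
  refine htend.congr' ?_
  filter_upwards [eventually_ge_atTop 1] with n hn
  have hn' : ((n:ℝ)) ≠ 0 := by
    have : (0:ℝ) < n := by exact_mod_cast hn
    exact this.ne'
  simp only [hu]
  field_simp
  rw [add_sub_cancel_right]

end Fekete

section Jensen

lemma jensen_aux {Ω : Type*} [MeasurableSpace Ω] (μ : Measure Ω) {w v : Ω → ℝ}
    (hw : Integrable w μ) (hw0 : ∀ a, 0 ≤ w a)
    (hwv : Integrable (fun a => w a * v a) μ)
    (hwe : Integrable (fun a => w a * Real.exp (v a)) μ)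
    {W : ℝ} (hW : 0 < W) (hWint : (∫ a, w a ∂μ) = W) :
    W * Real.exp ((∫ a, w a * v a ∂μ) / W) ≤ ∫ a, w a * Real.exp (v a) ∂μ := by
  set s : ℝ := (∫ a, w a * v a ∂μ) / W with hs
  have hpt : ∀ a, Real.exp s * (w a * v a - s * w a + w a) ≤ w a * Real.exp (v a) := by
    intro a
    have h1 : v a - s + 1 ≤ Real.exp (v a - s) := by
      have := Real.add_one_le_exp (v a - s)
      linarith
    have h2 : Real.exp (v a) = Real.exp s * Real.exp (v a - s) := by
      rw [← Real.exp_add]; congr 1; ring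
    have h3 := mul_le_mul_of_nonneg_left h1 (mul_nonneg (Real.exp_pos s).le (hw0 a))
    calc Real.exp s * (w a * v a - s * w a + w a)
        = (Real.exp s * w a) * (v a - s + 1) := by ring
      _ ≤ (Real.exp s * w a) * Real.exp (v a - s) := h3
      _ = w a * Real.exp (v a) := by rw [h2]; ring
  have hint : Integrable (fun a => Real.exp s * (w a * v a - s * w a + w a)) μ :=
    (((hwv.sub (hw.const_mul s)).add hw).const_mul (Real.exp s))
  have hmono := integral_mono hint hwe hpt
  have hcalc : (∫ a, Real.exp s * (w a * v a - s * w a + w a) ∂μ) = W * Real.exp s := by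
    have hint2 : Integrable (fun a => w a * v a - s * w a) μ := hwv.sub (hw.const_mul s)
    rw [integral_const_mul, integral_add hint2 hw,
      integral_sub hwv (hw.const_mul s), integral_const_mul, hWint, hs]
    field_simp
    ring
  rw [hcalc] at hmono
  exact le_of_eq_of_le (by ring) hmono

end Jensen

section Gibbs

variable {f h : (ℕ → E) → ℝ} {lam c Ch : ℝ}

/-- The normalized transfer operator. -/
def Ttil (p : Measure E) (f h : (ℕ → E) → ℝ) (lam : ℝ) (φ : (ℕ → E) → ℝ) : (ℕ → E) → ℝ :=
  fun x => ruelle p f (fun y => h y * φ y) x / (lam * h x)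

/-- The Birkhoff-type sums of iterates of the normalized operator. -/
def Bsum (p : Measure E) (f h : (ℕ → E) → ℝ) (lam : ℝ) (ψ : (ℕ → E) → ℝ) (n : ℕ)
    (x : ℕ → E) : ℝ :=
  ∑ j ∈ Finset.range n, (Ttil p f h lam)^[j+1] ψ x

variable (hf : MemCb f) (hh : MemCb h) (hlam : 0 < lam) (hc : 0 < c)
  (hhc : ∀ x, c ≤ h x) (hhC : ∀ x, h x ≤ Ch)
  (heig : ∀ x, ruelle p f h x = lam * h x)

include hf hh hlam hc hhc in
lemma memCb_Ttil {φ : (ℕ → E) → ℝ} (hφ : MemCb φ) : MemCb (Ttil p f h lam φ) := by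
  have hr := ruelle_memCb p hf (memCb_mul hh hφ)
  obtain ⟨M, hM⟩ := hr.2
  have hden : ∀ x, lam * c ≤ lam * h x := fun x =>
    mul_le_mul_of_nonneg_left (hhc x) hlam.le
  have hdenpos : ∀ x : ℕ → E, (0:ℝ) < lam * h x := fun x => lt_of_lt_of_le (by positivity) (hden x)
  constructor
  · exact hr.1.div (continuous_const.mul hh.1) (fun x => (hdenpos x).ne')
  · refine ⟨M / (lam * c), fun x => ?_⟩
    rw [Ttil, abs_div, abs_of_pos (hdenpos x)]
    refine div_le_div₀ ?_ (hM x) (by positivity) (hden x)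
    exact le_trans (abs_nonneg _) (hM x)

include hf hh hlam hc hhc in
lemma memCb_Ttil_iter {φ : (ℕ → E) → ℝ} (hφ : MemCb φ) (n : ℕ) :
    MemCb ((Ttil p f h lam)^[n] φ) := by
  induction n with
  | zero => exact hφ
  | succ n ih => rw [Function.iterate_succ_apply']; exact memCb_Ttil p hf hh hlam hc hhc ih

include hf hh hlam hc hhc in
lemma memCb_Bsum {ψ : (ℕ → E) → ℝ} (hψ : MemCb ψ) (n : ℕ) :
    MemCb (Bsum p f h lam ψ n) := by
  induction n with
  | zero =>
    have h0 : Bsum p f h lam ψ 0 = fun _ => (0:ℝ) := by funext x; simp [Bsum]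
    rw [h0]; exact memCb_const 0
  | succ n ih =>
    have heq : Bsum p f h lam ψ (n+1)
        = fun y => Bsum p f h lam ψ n y + (Ttil p f h lam)^[n+1] ψ y := by
      funext y; simp [Bsum, Finset.sum_range_succ]
    rw [heq]
    exact memCb_add ih (memCb_Ttil_iter p hf hh hlam hc hhc hψ (n+1))

include hf hh in
lemma Ttil_add {φ₁ φ₂ : (ℕ → E) → ℝ} (h1 : MemCb φ₁) (h2 : MemCb φ₂) (x : ℕ → E) :
    Ttil p f h lam (fun y => φ₁ y + φ₂ y) x = Ttil p f h lam φ₁ x + Ttil p f h lam φ₂ x := by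
  unfold Ttil
  rw [← add_div]
  congr 1
  have : (fun y => h y * (φ₁ y + φ₂ y)) = fun y => h y * φ₁ y + h y * φ₂ y := by
    funext y; ring
  rw [this, ruelle_add p hf (memCb_mul hh h1) (memCb_mul hh h2)]

include hf hh hlam hc hhc in
lemma Ttil_Bsum_succ {ψ : (ℕ → E) → ℝ} (hψ : MemCb ψ) (n : ℕ) (x : ℕ → E) :
    Ttil p f h lam (fun y => ψ y + Bsum p f h lam ψ n y) x = Bsum p f h lam ψ (n+1) x := by
  have hB := memCb_Bsum p hf hh hlam hc hhc hψ n
  rw [Ttil_add p hf hh hψ hB x]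
  have hsum : ∀ m : ℕ, Ttil p f h lam (Bsum p f h lam ψ m) x
      = ∑ j ∈ Finset.range m, (Ttil p f h lam)^[j+1+1] ψ x := by
    intro m
    induction m with
    | zero =>
      simp only [Finset.range_zero, Finset.sum_empty]
      have h0 : Bsum p f h lam ψ 0 = fun _ => (0:ℝ) := by
        funext y; simp [Bsum]
      rw [h0]
      unfold Ttil
      have : (fun y => h y * (0:ℝ)) = fun _ : ℕ → E => (0:ℝ) * 1 := by funext y; ring
      rw [this, ruelle_const_mul]
      simp
    | succ m ih =>
      have hsplit : Bsum p f h lam ψ (m+1)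
          = fun y => Bsum p f h lam ψ m y + (Ttil p f h lam)^[m+1] ψ y := by
        funext y; simp [Bsum, Finset.sum_range_succ]
      rw [hsplit, Ttil_add p hf hh (memCb_Bsum p hf hh hlam hc hhc hψ m)
        (memCb_Ttil_iter p hf hh hlam hc hhc hψ (m+1)) x, ih,
        Finset.sum_range_succ]
      congr 1
      rw [← Function.iterate_succ_apply' (Ttil p f h lam) (m+1) ψ]
  rw [hsum n, Bsum, Finset.sum_range_succ' (fun j => (Ttil p f h lam)^[j+1] ψ x) n]
  have h01 : (Ttil p f h lam)^[0+1] ψ x = Ttil p f h lam ψ x := by norm_num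
  rw [h01]
  exact add_comm _ _

include hf hh hlam hc hhc hhC heig in
lemma main_claim {g : (ℕ → E) → ℝ} (hg : MemCb g) (n : ℕ) (x : ℕ → E) :
    lam ^ n * h x * Real.exp (Bsum p f h lam (fun y => g y - f y) n x) ≤
      (ruelle p g)^[n] h x := by
  set ψ : (ℕ → E) → ℝ := fun y => g y - f y with hψdef
  have hψ : MemCb ψ := memCb_sub hg hf
  induction n generalizing x with
  | zero =>
    have h0 : Bsum p f h lam ψ 0 x = 0 := by simp [Bsum]
    rw [h0, Real.exp_zero, pow_zero, one_mul, mul_one]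
    exact le_rfl
  | succ n ih =>
    have hB := memCb_Bsum p hf hh hlam hc hhc hψ n
    have hBsucc := memCb_Bsum p hf hh hlam hc hhc hψ (n+1)
    have hhx : 0 < h x := hc.trans_le (hhc x)
    have hW : 0 < lam * h x := by positivity
    rw [Function.iterate_succ_apply']
    have hiter := ruelle_iter_memCb p hg hh n
    have hlow : MemCb (fun y => lam ^ n * (h y * Real.exp (Bsum p f h lam ψ n y))) :=
      memCb_const_mul (memCb_mul hh (memCb_exp hB)) _
    have hptle : ∀ y, lam ^ n * (h y * Real.exp (Bsum p f h lam ψ n y)) ≤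
        (ruelle p g)^[n] h y := by
      intro y
      calc lam ^ n * (h y * Real.exp (Bsum p f h lam ψ n y))
          = lam ^ n * h y * Real.exp (Bsum p f h lam ψ n y) := by ring
        _ ≤ (ruelle p g)^[n] h y := ih y
    have hmono := ruelle_mono p hg hlow hiter hptle x
    rw [ruelle_const_mul] at hmono
    -- now bound `ruelle p g (fun y => h y * exp (B y)) x` from below by Jensen
    set w : E → ℝ := fun a => Real.exp (f (cons a x)) * h (cons a x) with hwdef
    set v : E → ℝ := fun a => ψ (cons a x) + Bsum p f h lam ψ n (cons a x) with hvdef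
    have hw : Integrable w p := memCb_integrable_cons p (memCb_mul (memCb_exp hf) hh) x
    have hw0 : ∀ a, 0 ≤ w a := fun a =>
      mul_nonneg (Real.exp_pos _).le ((hc.trans_le (hhc _)).le)
    have hwv : Integrable (fun a => w a * v a) p :=
      memCb_integrable_cons p
        (memCb_mul (memCb_mul (memCb_exp hf) hh) (memCb_add hψ hB)) x
    have hwe : Integrable (fun a => w a * Real.exp (v a)) p :=
      memCb_integrable_cons p
        (memCb_mul (memCb_mul (memCb_exp hf) hh) (memCb_exp (memCb_add hψ hB))) x
    have hWint : (∫ a, w a ∂p) = lam * h x := heig x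
    have hjensen := jensen_aux p hw hw0 hwv hwe hW hWint
    have hwv_eq : (∫ a, w a * v a ∂p)
        = ruelle p f (fun y => h y * (ψ y + Bsum p f h lam ψ n y)) x := by
      unfold ruelle
      refine integral_congr_ae (ae_of_all _ fun a => ?_)
      simp only [hwdef, hvdef]
      ring
    have hs_eq : (∫ a, w a * v a ∂p) / (lam * h x) = Bsum p f h lam ψ (n+1) x := by
      rw [hwv_eq]
      exact Ttil_Bsum_succ p hf hh hlam hc hhc hψ n x
    have hru_eq : ruelle p g (fun y => h y * Real.exp (Bsum p f h lam ψ n y)) x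
        = ∫ a, w a * Real.exp (v a) ∂p := by
      unfold ruelle
      refine integral_congr_ae (ae_of_all _ fun a => ?_)
      simp only [hwdef, hvdef, hψdef]
      rw [show g (cons a x) = f (cons a x) + (g (cons a x) - f (cons a x)) by ring,
        Real.exp_add, Real.exp_add]
      ring
    rw [hs_eq] at hjensen
    calc lam ^ (n+1) * h x * Real.exp (Bsum p f h lam ψ (n+1) x)
        = lam ^ n * ((lam * h x) * Real.exp (Bsum p f h lam ψ (n+1) x)) := by ring
      _ ≤ lam ^ n * (∫ a, w a * Real.exp (v a) ∂p) := by
          refine mul_le_mul_of_nonneg_left hjensen (by positivity)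
      _ = lam ^ n * ruelle p g (fun y => h y * Real.exp (Bsum p f h lam ψ n y)) x := by
          rw [hru_eq]
      _ ≤ ruelle p g ((ruelle p g)^[n] h) x := hmono

end Gibbs

section Nu

variable [TopologicalSpace.SeparableSpace E]
variable {f h : (ℕ → E) → ℝ} {lam c Ch : ℝ}
variable (hf : MemCb f) (hh : MemCb h) (hlam : 0 < lam) (hc : 0 < c)
  (hhc : ∀ x, c ≤ h x) (hhC : ∀ x, h x ≤ Ch)
  (heig : ∀ x, ruelle p f h x = lam * h x)
variable (ν : Measure (ℕ → E)) [IsProbabilityMeasure ν]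
  (hconf : ∀ φ : (ℕ → E) → ℝ, MemCb φ → (∫ x, ruelle p f φ x ∂ν) = lam * ∫ x, φ x ∂ν)
  (hnorm : (∫ x, h x ∂ν) = 1)

lemma borelX : BorelSpace (ℕ → E) := by
  haveI : SecondCountableTopology E := UniformSpace.secondCountable_of_separable E
  infer_instance

lemma memCb_integrable_nu {φ : (ℕ → E) → ℝ} (hφ : MemCb φ) : Integrable φ ν := by
  haveI := borelX (E := E)
  obtain ⟨M, hM⟩ := hφ.2
  exact integrable_of_cb ν hφ.1 hM

include hf hh hlam hc hhc hconf in
lemma Ttil_int {φ : (ℕ → E) → ℝ} (hφ : MemCb φ) :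
    ∫ x, Ttil p f h lam φ x * h x ∂ν = ∫ x, φ x * h x ∂ν := by
  have hpt : ∀ x, Ttil p f h lam φ x * h x = ruelle p f (fun y => h y * φ y) x / lam := by
    intro x
    have hx : h x ≠ 0 := (hc.trans_le (hhc x)).ne'
    show ruelle p f (fun y => h y * φ y) x / (lam * h x) * h x = _
    field_simp
  rw [integral_congr_ae (ae_of_all _ hpt), integral_div, hconf _ (memCb_mul hh hφ)]
  rw [mul_comm, mul_div_assoc, div_self hlam.ne', mul_one]
  exact integral_congr_ae (ae_of_all _ fun x => mul_comm _ _)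

include hf hh hlam hc hhc hconf in
lemma Ttil_iter_int {ψ : (ℕ → E) → ℝ} (hψ : MemCb ψ) (j : ℕ) :
    ∫ x, (Ttil p f h lam)^[j] ψ x * h x ∂ν = ∫ x, ψ x * h x ∂ν := by
  induction j with
  | zero => rfl
  | succ j ih =>
    have heq : ∀ x, (Ttil p f h lam)^[j+1] ψ x = Ttil p f h lam ((Ttil p f h lam)^[j] ψ) x :=
      fun x => by rw [Function.iterate_succ_apply']
    calc ∫ x, (Ttil p f h lam)^[j+1] ψ x * h x ∂ν
        = ∫ x, Ttil p f h lam ((Ttil p f h lam)^[j] ψ) x * h x ∂ν :=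
          integral_congr_ae (ae_of_all _ fun x => by
            show (Ttil p f h lam)^[j+1] ψ x * h x
              = Ttil p f h lam ((Ttil p f h lam)^[j] ψ) x * h x
            rw [heq x])
      _ = ∫ x, (Ttil p f h lam)^[j] ψ x * h x ∂ν :=
          Ttil_int p hf hh hlam hc hhc ν hconf (memCb_Ttil_iter p hf hh hlam hc hhc hψ j)
      _ = ∫ x, ψ x * h x ∂ν := ih

include hf hh hlam hc hhc hconf in
lemma Bsum_int {ψ : (ℕ → E) → ℝ} (hψ : MemCb ψ) (n : ℕ) :
    ∫ x, Bsum p f h lam ψ n x * h x ∂ν = n * ∫ x, ψ x * h x ∂ν := by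
  have hpt : ∀ x, Bsum p f h lam ψ n x * h x
      = ∑ j ∈ Finset.range n, (Ttil p f h lam)^[j+1] ψ x * h x := by
    intro x
    rw [Bsum, Finset.sum_mul]
  rw [integral_congr_ae (ae_of_all _ hpt),
    integral_finset_sum _ (fun j _ => memCb_integrable_nu ν
      (memCb_mul (memCb_Ttil_iter p hf hh hlam hc hhc hψ (j+1)) hh))]
  have : ∀ j ∈ Finset.range n, (∫ x, (Ttil p f h lam)^[j+1] ψ x * h x ∂ν)
      = ∫ x, ψ x * h x ∂ν := fun j _ => Ttil_iter_int p hf hh hlam hc hhc ν hconf hψ (j+1)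
  rw [Finset.sum_congr rfl this, Finset.sum_const, Finset.card_range, nsmul_eq_mul]

include hf hh hlam hc hhc hhC heig hconf hnorm in
lemma gibbs_bound {α Cg : ℝ} (hα : 0 < α) (hCg : 0 ≤ Cg) {g : (ℕ → E) → ℝ} (hg : MemCb g)
    (hHol : HolderConst α Cg g) {Mg : ℝ} (hgb : ∀ x, |g x| ≤ Mg) (x₀ : ℕ → E) :
    ∃ ℓ : ℝ, Tendsto (fun n : ℕ => (1 / (n:ℝ)) *
        Real.log ((ruelle p g)^[n] (fun _ => 1) x₀)) atTop (𝓝 ℓ) ∧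
      Real.log lam + ∫ x, (g x - f x) * h x ∂ν ≤ ℓ := by
  obtain ⟨ℓ, hℓ⟩ := exists_tendsto_log_ruelle p hα hCg hg hHol hgb x₀
  refine ⟨ℓ, hℓ, ?_⟩
  set ψ : (ℕ → E) → ℝ := fun y => g y - f y with hψdef
  have hψ : MemCb ψ := memCb_sub hg hf
  set J : ℝ := ∫ x, ψ x * h x ∂ν with hJ
  have hCh : 0 < Ch := hc.trans_le ((hhc x₀).trans (hhC x₀))
  have hlogh : MemCb (fun x => Real.log (h x)) := by
    constructor
    · rw [continuous_iff_continuousAt]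
      intro x
      exact (Real.continuousAt_log (hc.trans_le (hhc x)).ne').comp hh.1.continuousAt
    · refine ⟨|Real.log c| + |Real.log Ch|, fun x => ?_⟩
      have h1 : Real.log c ≤ Real.log (h x) := Real.log_le_log hc (hhc x)
      have h2 : Real.log (h x) ≤ Real.log Ch :=
        Real.log_le_log (hc.trans_le (hhc x)) (hhC x)
      rw [abs_le]
      constructor
      · linarith [neg_abs_le (Real.log c), abs_nonneg (Real.log Ch)]
      · linarith [le_abs_self (Real.log Ch), abs_nonneg (Real.log c)]
  set Ih : ℝ := ∫ x, Real.log (h x) * h x ∂ν with hIh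
  set D : ℝ := Real.log Ch + Cg * Kq α with hD
  have hkey : ∀ n : ℕ, (n:ℝ) * (Real.log lam + J) + Ih - D ≤
      Real.log ((ruelle p g)^[n] (fun _ => 1) x₀) := by
    intro n
    set L1 : ℝ := (ruelle p g)^[n] (fun _ => 1) x₀ with hL1
    have hL1pos : 0 < L1 := ruelle_iter_one_pos p hg.1 hgb n x₀
    set A : ℝ := D + Real.log L1 - (n:ℝ) * Real.log lam with hA
    have hclaim := fun x => main_claim p hf hh hlam hc hhc hhC heig hg n x
    have hB := memCb_Bsum p hf hh hlam hc hhc hψ n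
    have hlogb : ∀ x, Bsum p f h lam ψ n x ≤ A - Real.log (h x) := by
      intro x
      have hxpos : 0 < h x := hc.trans_le (hhc x)
      have hlampow : (0:ℝ) < lam ^ n := pow_pos hlam n
      -- lower log bound
      have hl := Real.log_le_log (by positivity) (hclaim x)
      rw [Real.log_mul (by positivity) (Real.exp_pos _).ne',
        Real.log_mul hlampow.ne' hxpos.ne', Real.log_exp, Real.log_pow] at hl
      -- upper bound on L^n h x
      have h2 := ruelle_iter_mono p hg hh (memCb_const_mul (memCb_const 1) Ch)
        (fun y => by simpa using hhC y) n x
      rw [ruelle_iter_const_mul] at h2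
      have h3 := ruelle_iter_one_compare p hα hCg hg hHol n x x₀
      have hup : (ruelle p g)^[n] h x ≤ Ch * (Real.exp (Cg * Kq α) * L1) :=
        h2.trans (mul_le_mul_of_nonneg_left h3 hCh.le)
      have hLpos : 0 < (ruelle p g)^[n] h x :=
        lt_of_lt_of_le (by positivity) (hclaim x)
      have hu := Real.log_le_log hLpos hup
      rw [Real.log_mul hCh.ne' (by positivity),
        Real.log_mul (Real.exp_pos _).ne' hL1pos.ne', Real.log_exp] at hu
      simp only [hA, hD]
      linarith
    have hint1 : Integrable (fun x => Bsum p f h lam ψ n x * h x) ν :=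
      memCb_integrable_nu ν (memCb_mul hB hh)
    have hint2 : Integrable (fun x => (A - Real.log (h x)) * h x) ν :=
      memCb_integrable_nu ν (memCb_mul (memCb_sub (memCb_const A) hlogh) hh)
    have hmono := integral_mono hint1 hint2 (fun x =>
      mul_le_mul_of_nonneg_right (hlogb x) ((hc.trans_le (hhc x)).le))
    have hLHS : ∫ x, Bsum p f h lam ψ n x * h x ∂ν = n * J :=
      Bsum_int p hf hh hlam hc hhc ν hconf hψ n
    have hRHS : ∫ x, (A - Real.log (h x)) * h x ∂ν = A - Ih := by
      have hptr : ∀ x, (A - Real.log (h x)) * h x = A * h x - Real.log (h x) * h x :=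
        fun x => by ring
      rw [integral_congr_ae (ae_of_all _ hptr),
        integral_sub ((memCb_integrable_nu ν hh).const_mul A)
          (memCb_integrable_nu ν (memCb_mul hlogh hh)),
        integral_const_mul, hnorm, mul_one, hIh]
    rw [hLHS, hRHS] at hmono
    simp only [hA] at hmono
    linarith
  have h1 : Tendsto (fun n : ℕ => Real.log lam + J + (Ih - D) / n) atTop
      (𝓝 (Real.log lam + J)) := by
    simpa using (tendsto_const_div_atTop_nhds_zero_nat (Ih - D)).const_add (Real.log lam + J)
  refine le_of_tendsto_of_tendsto h1 hℓ ?_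
  filter_upwards [eventually_ge_atTop 1] with n hn
  have hn' : (0:ℝ) < n := by exact_mod_cast hn
  have hkn := hkey n
  have := mul_le_mul_of_nonneg_left hkn (le_of_lt (by positivity : (0:ℝ) < 1 / n))
  calc Real.log lam + J + (Ih - D) / n
      = (1 / (n:ℝ)) * ((n:ℝ) * (Real.log lam + J) + Ih - D) := by
        field_simp
        ring
    _ ≤ (1 / (n:ℝ)) * Real.log ((ruelle p g)^[n] (fun _ => 1) x₀) := this

end Nu

end S16

/-- For a bounded Hölder potential `f`, the variational supremum
equals `log λ_f` and is attained by the countably additive Borel probability measure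
`μ_f = h dν`; in particular `f` admits an equilibrium state whose Yosida–Hewitt
decomposition has no purely finitely additive part. -/
theorem statement16 {E : Type*} [MetricSpace E] [CompleteSpace E]
    [TopologicalSpace.SeparableSpace E] [MeasurableSpace E] [BorelSpace E] [Nonempty E]
    (p : Measure E) [IsProbabilityMeasure p]
    (α : ℝ) (hα0 : 0 < α) (hα1 : α < 1)
    (f : (ℕ → E) →ᵇ ℝ) (hf : ∃ C : ℝ, HolderConst α C ⇑f)
    (ν : Measure (ℕ → E)) (hν : IsProbabilityMeasure ν) (lam : ℝ) (hlam : 0 < lam)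
    (hconf : ∀ φ : (ℕ → E) → ℝ, MemCb φ →
      (∫ x, ruelle p (⇑f) φ x ∂ν) = lam * ∫ x, φ x ∂ν)
    (h : (ℕ → E) → ℝ) (hh : MemHol α h)
    (hbd : ∃ c C : ℝ, 0 < c ∧ (∀ x, c ≤ h x) ∧ ∀ x, h x ≤ C)
    (heig : ∀ x, ruelle p (⇑f) h x = lam * h x)
    (hnorm : (∫ x, h x ∂ν) = 1) :
    (⨆ μ ∈ Maσ E, entropyV p α μ + ((μ f : ℝ) : EReal)) = ((Real.log lam : ℝ) : EReal) ∧
    ∃ μf : WeakDual ℝ ((ℕ → E) →ᵇ ℝ),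
      (∀ g : (ℕ → E) →ᵇ ℝ, μf g = ∫ x, g x * h x ∂ν) ∧
      μf ∈ Maσ E ∧
      entropyV p α μf + ((μf f : ℝ) : EReal) = ((Real.log lam : ℝ) : EReal) := by
  classical
  haveI := hν
  obtain ⟨c, Ch, hc, hhc, hhC⟩ := hbd
  have hCh : 0 < Ch := hc.trans_le ((hhc (Classical.arbitrary _)).trans (hhC _))
  have hhcb : MemCb h := ⟨hh.1, hh.2.1⟩
  have hbcf_memCb : ∀ g : (ℕ → E) →ᵇ ℝ, MemCb ⇑g := fun g =>
    ⟨g.continuous, ‖g‖, fun x => by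
      simpa [Real.norm_eq_abs] using g.norm_coe_le_norm x⟩
  have hfcb : MemCb ⇑f := hbcf_memCb f
  set x₀ := Classical.arbitrary (ℕ → E) with hx₀
  -- `log λ_f = log lam`
  have htf := S16.tendsto_log_ruelle_iter_eigen p hfcb hhcb hlam hc hhc hhC heig x₀
  have hlogf : logLambda p ⇑f = Real.log lam := htf.limUnder_eq
  -- integrability of `g·h` w.r.t. `ν`
  have hint : ∀ g : (ℕ → E) →ᵇ ℝ, Integrable (fun x => g x * h x) ν := fun g =>
    S16.memCb_integrable_nu ν (S16.memCb_mul (hbcf_memCb g) hhcb)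
  -- construction of `μ_f = h dν`
  set μlin : ((ℕ → E) →ᵇ ℝ) →ₗ[ℝ] ℝ :=
    { toFun := fun g => ∫ x, g x * h x ∂ν
      map_add' := fun g₁ g₂ => by
        have heq : (fun x => (g₁ + g₂) x * h x) = fun x => g₁ x * h x + g₂ x * h x := by
          funext x
          simp [add_mul]
        simp only [heq]
        exact integral_add (hint g₁) (hint g₂)
      map_smul' := fun r g => by
        have heq : (fun x => (r • g) x * h x) = fun x => r * (g x * h x) := by
          funext x
          simp [smul_eq_mul]
          ring
        simp only [RingHom.id_apply, heq, smul_eq_mul]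
        exact integral_const_mul r _ } with hμlin
  have hbound : ∀ g : (ℕ → E) →ᵇ ℝ, ‖μlin g‖ ≤ Ch * ‖g‖ := by
    intro g
    have h1 : ∀ x, ‖g x * h x‖ ≤ ‖g‖ * Ch := by
      intro x
      rw [norm_mul]
      refine mul_le_mul (g.norm_coe_le_norm x) ?_ (norm_nonneg _) (norm_nonneg _)
      rw [Real.norm_eq_abs, abs_of_pos (hc.trans_le (hhc x))]
      exact hhC x
    have h2 := norm_integral_le_of_norm_le_const (μ := ν)
      (f := fun x => g x * h x) (ae_of_all _ h1)
    simp only [probReal_univ, mul_one] at h2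
    calc ‖μlin g‖ = ‖∫ x, g x * h x ∂ν‖ := rfl
      _ ≤ ‖g‖ * Ch := h2
      _ = Ch * ‖g‖ := mul_comm _ _
  set μf : WeakDual ℝ ((ℕ → E) →ᵇ ℝ) := LinearMap.mkContinuous μlin Ch hbound with hμf
  have hμf_apply : ∀ g : (ℕ → E) →ᵇ ℝ, μf g = ∫ x, g x * h x ∂ν := fun g => rfl
  -- shift invariance of `μ_f`
  have hshift : ∀ g : (ℕ → E) →ᵇ ℝ,
      (∫ x, g (shift x) * h x ∂ν) = ∫ x, g x * h x ∂ν := by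
    intro g
    have hgcb : MemCb fun x : ℕ → E => g (shift x) :=
      ⟨g.continuous.comp continuous_shift, ‖g‖, fun x => by
        simpa [Real.norm_eq_abs] using g.norm_coe_le_norm (shift x)⟩
    have hφ : MemCb (fun x => h x * g (shift x)) := S16.memCb_mul hhcb hgcb
    have h1 := hconf _ hφ
    have h2 : ∀ x, ruelle p (⇑f) (fun y => h y * g (shift y)) x = lam * (g x * h x) := by
      intro x
      have h2a : ruelle p (⇑f) (fun y => h y * g (shift y)) x
          = (∫ a, Real.exp (f (cons a x)) * h (cons a x) ∂p) * g x := by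
        unfold ruelle
        rw [← integral_mul_const]
        refine integral_congr_ae (ae_of_all _ fun a => ?_)
        show Real.exp (f (cons a x)) * (h (cons a x) * g (shift (cons a x)))
          = Real.exp (f (cons a x)) * h (cons a x) * g x
        rw [show shift (cons a x) = x from rfl]
        ring
      have h2b : (∫ a, Real.exp (f (cons a x)) * h (cons a x) ∂p) = lam * h x := heig x
      rw [h2a, h2b]
      ring
    have h3 : (∫ x, ruelle p (⇑f) (fun y => h y * g (shift y)) x ∂ν)
        = lam * ∫ x, g x * h x ∂ν := by
      rw [integral_congr_ae (ae_of_all _ h2)]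
      exact integral_const_mul lam _
    have h4 : (∫ x, h x * g (shift x) ∂ν) = ∫ x, g (shift x) * h x ∂ν :=
      integral_congr_ae (ae_of_all _ fun x => mul_comm _ _)
    rw [h3, h4] at h1
    exact mul_left_cancel₀ hlam.ne' h1.symm
  -- `μ_f ∈ M^a_σ`
  have hμfmem : μf ∈ Maσ E := by
    refine ⟨⟨?_, ?_⟩, ?_⟩
    · rw [hμf_apply]
      rw [show (fun x : ℕ → E => (1 : (ℕ → E) →ᵇ ℝ) x * h x) = fun x => h x from
        funext fun x => by simp]
      exact hnorm
    · intro g hg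
      rw [hμf_apply]
      exact integral_nonneg fun x => mul_nonneg (hg x) (hc.trans_le (hhc x)).le
    · intro g
      rw [hμf_apply, hμf_apply]
      rw [show (fun x : ℕ → E => (g.compContinuous shiftCM) x * h x)
          = fun x => g (shift x) * h x from funext fun x => rfl]
      exact hshift g
  -- the Gibbs inequality for every admissible Hölder `g`
  have hglb : ∀ g : (ℕ → E) →ᵇ ℝ, (∃ C : ℝ, HolderConst α C ⇑g) →
      Real.log lam + (μf g - μf f) ≤ logLambda p ⇑g := by
    intro g hgHol
    obtain ⟨C0, hC0⟩ := hgHol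
    have hCg0 : (0:ℝ) ≤ max C0 0 := le_max_right _ _
    have hHol' : HolderConst α (max C0 0) ⇑g := fun x y =>
      (hC0 x y).trans (mul_le_mul_of_nonneg_right (le_max_left _ _)
        (Real.rpow_nonneg (S16.dX_nonneg x y) α))
    have hgb : ∀ x, |g x| ≤ ‖g‖ := fun x => by
      simpa [Real.norm_eq_abs] using g.norm_coe_le_norm x
    obtain ⟨ℓ, hℓtend, hℓge⟩ := S16.gibbs_bound p hfcb hhcb hlam hc hhc hhC heig ν hconf
      hnorm hα0 hCg0 (hbcf_memCb g) hHol' hgb x₀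
    have hlog : logLambda p ⇑g = ℓ := hℓtend.limUnder_eq
    rw [hlog]
    refine le_trans (le_of_eq ?_) hℓge
    have hsub : (∫ x, (g x - f x) * h x ∂ν) = μf g - μf f := by
      rw [hμf_apply, hμf_apply]
      rw [show (fun x : ℕ → E => (g x - f x) * h x)
          = fun x => g x * h x - f x * h x from funext fun x => by ring]
      exact integral_sub (hint g) (hint f)
    rw [hsub]
  -- upper bound for arbitrary `μ`
  have hub : ∀ μ ∈ Maσ E, entropyV p α μ + ((μ f : ℝ) : EReal) ≤
      ((Real.log lam : ℝ) : EReal) := by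
    intro μ _
    have h1 : entropyV p α μ ≤ ((-(μ f) + Real.log lam : ℝ) : EReal) :=
      sInf_le ⟨f, hf, by rw [hlogf]⟩
    calc entropyV p α μ + ((μ f : ℝ) : EReal)
        ≤ ((-(μ f) + Real.log lam : ℝ) : EReal) + ((μ f : ℝ) : EReal) :=
          add_le_add_left h1 _
      _ = ((Real.log lam : ℝ) : EReal) := by
          rw [← EReal.coe_add]
          congr 1
          ring
  -- the value at `μ_f`
  have hge : ((Real.log lam - μf f : ℝ) : EReal) ≤ entropyV p α μf := by
    refine le_sInf ?_
    rintro r ⟨g, hgHol, rfl⟩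
    rw [EReal.coe_le_coe_iff]
    have := hglb g hgHol
    linarith
  have hle : entropyV p α μf ≤ ((Real.log lam - μf f : ℝ) : EReal) := by
    have h1 : entropyV p α μf ≤ ((-(μf f) + Real.log lam : ℝ) : EReal) :=
      sInf_le ⟨f, hf, by rw [hlogf]⟩
    refine h1.trans (le_of_eq ?_)
    congr 1
    ring
  have heqent : entropyV p α μf = ((Real.log lam - μf f : ℝ) : EReal) :=
    le_antisymm hle hge
  have hattain : entropyV p α μf + ((μf f : ℝ) : EReal) = ((Real.log lam : ℝ) : EReal) := by
    rw [heqent, ← EReal.coe_add]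
    congr 1
    ring
  refine ⟨le_antisymm (iSup₂_le hub) (le_iSup₂_of_le μf hμfmem (le_of_eq hattain.symm)), 
    μf, hμf_apply, hμfmem, hattain⟩

end
end

section
/- For every bounded continuous potential f ∈ C_b(X,ℝ), the set of equilibrium states Eq(f) = { μ ∈ M^a_σ(X) : h^v(μ) + μ(f) = sup_{ν ∈ M^a_σ(X)} [ h^v(ν) + ν(f) ] } is a convex and weak-* compact subset of M^a_σ(X). -/
open MeasureTheory Filter Topology BoundedContinuousFunction

noncomputable section

variable {E : Type*} [MetricSpace E]

variable [MeasurableSpace E] [BorelSpace E]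

section Aux

variable {E : Type*} [MetricSpace E]

lemma aux_holder_zero (α : ℝ) : HolderConst α 0 ⇑(0 : (ℕ → E) →ᵇ ℝ) := by
  intro x y
  simp

lemma aux_abs_le {μ : WeakDual ℝ ((ℕ → E) →ᵇ ℝ)} (hμ : μ ∈ Ma1 E)
    (g : (ℕ → E) →ᵇ ℝ) : |μ g| ≤ ‖g‖ := by
  obtain ⟨h1, hpos⟩ := hμ
  have key : ∀ h : (ℕ → E) →ᵇ ℝ, (∀ x, h x ≤ ‖g‖) → μ h ≤ ‖g‖ := by
    intro h hh
    have : (0 : (ℕ → E) →ᵇ ℝ) ≤ ‖g‖ • (1 : (ℕ → E) →ᵇ ℝ) - h := by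
      intro x
      have := hh x
      show (0 : ℝ) ≤ ‖g‖ • (1 : ℝ) - h x
      simp only [smul_eq_mul, mul_one]
      linarith
    have h2 := hpos _ this
    rw [map_sub, map_smul, smul_eq_mul, h1, mul_one] at h2
    linarith
  have hg1 : μ g ≤ ‖g‖ := key g fun x =>
    (le_abs_self _).trans (g.norm_coe_le_norm x)
  have hg2 : μ (-g) ≤ ‖g‖ := key (-g) fun x => by
    have := (neg_le_abs _).trans (g.norm_coe_le_norm x)
    simpa using this
  rw [map_neg] at hg2
  rw [abs_le]
  constructor <;> linarith

lemma aux_maσ_closed : IsClosed (Maσ E) := by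
  have heq : Maσ E = ({μ | μ 1 = 1} ∩ ⋂ g ∈ {g : (ℕ → E) →ᵇ ℝ | 0 ≤ g}, {μ | 0 ≤ μ g}) ∩
      ⋂ g : (ℕ → E) →ᵇ ℝ, {μ : WeakDual ℝ ((ℕ → E) →ᵇ ℝ) |
        μ (g.compContinuous shiftCM) = μ g} := by
    ext μ
    simp only [Maσ, Ma1, Set.mem_setOf_eq, Set.mem_inter_iff, Set.mem_iInter]
  rw [heq]
  refine IsClosed.inter (IsClosed.inter ?_ ?_) ?_
  · exact isClosed_eq (WeakDual.eval_continuous _) continuous_const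
  · exact isClosed_biInter fun g _ => isClosed_le continuous_const (WeakDual.eval_continuous g)
  · exact isClosed_iInter fun g =>
      isClosed_eq (WeakDual.eval_continuous _) (WeakDual.eval_continuous g)

lemma aux_maσ_convex : Convex ℝ (Maσ E) := by
  intro μ hμ ν hν a b ha hb hab
  obtain ⟨⟨hμ1, hμp⟩, hμi⟩ := hμ
  obtain ⟨⟨hν1, hνp⟩, hνi⟩ := hν
  refine ⟨⟨?_, ?_⟩, ?_⟩
  · show a * μ 1 + b * ν 1 = 1
    rw [hμ1, hν1]; linarith
  · intro g hg
    have h1 := hμp g hg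
    have h2 := hνp g hg
    show 0 ≤ a * μ g + b * ν g
    have := mul_nonneg ha h1
    have := mul_nonneg hb h2
    linarith
  · intro g
    show a * μ _ + b * ν _ = a * μ g + b * ν g
    simp only [hμi, hνi]

variable [MeasurableSpace E] [BorelSpace E]

/-- Characterization of `s ≤ h^v(μ) + μ(f)` through the defining infimum. -/
lemma aux_char [Nonempty E] (p : Measure E) (α : ℝ) (f : (ℕ → E) →ᵇ ℝ)
    (μ : WeakDual ℝ ((ℕ → E) →ᵇ ℝ)) (s : EReal) :
    s ≤ entropyV p α μ + ((μ f : ℝ) : EReal) ↔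
      ∀ g : (ℕ → E) →ᵇ ℝ, (∃ C : ℝ, HolderConst α C ⇑g) →
        s ≤ (((-(μ g) + logLambda p ⇑g + μ f : ℝ)) : EReal) := by
  constructor
  · intro h g hg
    have hm : ((-(μ g) + logLambda p ⇑g : ℝ) : EReal) ∈
        {r : EReal | ∃ g : (ℕ → E) →ᵇ ℝ, (∃ C : ℝ, HolderConst α C ⇑g) ∧
          r = ((-(μ g) + logLambda p ⇑g : ℝ) : EReal)} := ⟨g, hg, rfl⟩
    calc s ≤ entropyV p α μ + ((μ f : ℝ) : EReal) := h
      _ ≤ ((-(μ g) + logLambda p ⇑g : ℝ) : EReal) + ((μ f : ℝ) : EReal) :=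
          add_le_add_left (sInf_le hm) _
      _ = (((-(μ g) + logLambda p ⇑g + μ f : ℝ)) : EReal) := by
          rw [← EReal.coe_add]
  · intro h
    induction s using EReal.rec with
    | bot => exact bot_le
    | top =>
        exact absurd (h 0 ⟨0, aux_holder_zero α⟩) (EReal.coe_lt_top _).not_ge
    | coe x =>
        have key : ((x - μ f : ℝ) : EReal) ≤ entropyV p α μ := by
          refine le_sInf ?_
          rintro r ⟨g, hg, rfl⟩
          have := h g hg
          rw [EReal.coe_le_coe_iff] at this ⊢
          linarith
        calc ((x : ℝ) : EReal) = ((x - μ f : ℝ) : EReal) + ((μ f : ℝ) : EReal) := by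
              rw [← EReal.coe_add]; norm_num
          _ ≤ entropyV p α μ + ((μ f : ℝ) : EReal) := add_le_add_left key _

end Aux

/-- For every bounded continuous potential `f`, the set `Eq(f)` of
equilibrium states is convex and weak-* compact in `M^a_σ(X)`. -/
theorem statement17 {E : Type*} [MetricSpace E] [CompleteSpace E]
    [TopologicalSpace.SeparableSpace E] [MeasurableSpace E] [BorelSpace E] [Nonempty E]
    (p : Measure E) [IsProbabilityMeasure p]
    (α : ℝ) (hα0 : 0 < α) (hα1 : α < 1)
    (f : (ℕ → E) →ᵇ ℝ) :
    Convex ℝ {μ ∈ Maσ E | entropyV p α μ + ((μ f : ℝ) : EReal) =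
        ⨆ ν ∈ Maσ E, entropyV p α ν + ((ν f : ℝ) : EReal)} ∧
    IsCompact {μ ∈ Maσ E | entropyV p α μ + ((μ f : ℝ) : EReal) =
        ⨆ ν ∈ Maσ E, entropyV p α ν + ((ν f : ℝ) : EReal)} := by
  classical
  set s : EReal := ⨆ ν ∈ Maσ E, entropyV p α ν + ((ν f : ℝ) : EReal) with hs
  have hT : ∀ μ : WeakDual ℝ ((ℕ → E) →ᵇ ℝ),
      (μ ∈ Maσ E ∧ entropyV p α μ + ((μ f : ℝ) : EReal) = s) ↔
      (μ ∈ Maσ E ∧ s ≤ entropyV p α μ + ((μ f : ℝ) : EReal)) := by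
    intro μ
    constructor
    · rintro ⟨h1, h2⟩; exact ⟨h1, h2.ge⟩
    · rintro ⟨h1, h2⟩
      exact ⟨h1, le_antisymm
        (le_biSup (f := fun ν => entropyV p α ν + ((ν f : ℝ) : EReal)) h1) h2⟩
  constructor
  · -- convexity
    intro μ hμ ν hν a b ha hb hab
    obtain ⟨hμ1, hμ2⟩ := (hT μ).1 hμ
    obtain ⟨hν1, hν2⟩ := (hT ν).1 hν
    rw [aux_char] at hμ2 hν2
    refine (hT _).2 ⟨aux_maσ_convex hμ1 hν1 ha hb hab, ?_⟩
    rw [aux_char]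
    intro g hg
    have h1 := hμ2 g hg
    have h2 := hν2 g hg
    set tμ : ℝ := -(μ g) + logLambda p ⇑g + μ f with htμ
    set tν : ℝ := -(ν g) + logLambda p ⇑g + ν f with htν
    have key : (-((a • μ + b • ν) g) + logLambda p ⇑g + (a • μ + b • ν) f)
        = a * tμ + b * tν := by
      show -(a * μ g + b * ν g) + logLambda p ⇑g + (a * μ f + b * ν f) = _
      rw [htμ, htν]
      linear_combination (-(logLambda p ⇑g)) * hab
    rw [key]
    have hmin : s ≤ ((min tμ tν : ℝ) : EReal) := by
      rw [EReal.coe_strictMono.monotone.map_min]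
      exact le_min h1 h2
    refine hmin.trans ?_
    rw [EReal.coe_le_coe_iff]
    have k1 := mul_le_mul_of_nonneg_left (min_le_left tμ tν) ha
    have k2 := mul_le_mul_of_nonneg_left (min_le_right tμ tν) hb
    have hm : a * min tμ tν + b * min tμ tν = min tμ tν := by
      rw [← add_mul, hab, one_mul]
    linarith
  · -- compactness
    have hset : {μ | μ ∈ Maσ E ∧ entropyV p α μ + ((μ f : ℝ) : EReal) = s} =
        Maσ E ∩ ⋂ (g : (ℕ → E) →ᵇ ℝ) (_ : ∃ C : ℝ, HolderConst α C ⇑g),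
          {μ : WeakDual ℝ ((ℕ → E) →ᵇ ℝ) |
            s ≤ (((-(μ g) + logLambda p ⇑g + μ f : ℝ)) : EReal)} := by
      ext μ
      rw [Set.mem_setOf_eq, hT μ, aux_char]
      simp only [Set.mem_inter_iff, Set.mem_iInter, Set.mem_setOf_eq]
    show IsCompact {μ | μ ∈ Maσ E ∧ entropyV p α μ + ((μ f : ℝ) : EReal) = s}
    rw [hset]
    refine IsCompact.of_isClosed_subset (WeakDual.isCompact_closedBall (𝕜 := ℝ) 0 1) ?_ ?_
    · refine aux_maσ_closed.inter (isClosed_iInter fun g => isClosed_iInter fun _ => ?_)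
      exact isClosed_le continuous_const (continuous_coe_real_ereal.comp
        (((WeakDual.eval_continuous g).neg.add continuous_const).add
          (WeakDual.eval_continuous f)))
    · rintro μ ⟨hμ, -⟩
      simp only [Set.mem_preimage, Metric.mem_closedBall, dist_zero_right]
      refine ContinuousLinearMap.opNorm_le_bound _ zero_le_one fun g => ?_
      rw [one_mul, Real.norm_eq_abs]
      exact aux_abs_le hμ.1 g

end
end

section
/- Let f ∈ Hol(α) be a bounded α-Hölder normalized potential (L_f 1 = 1) with distortion constant C_f, and let ν be the unique Borel probability measure on X with L_f^*ν = ν. Then the Markov operator P = L_f^* restricted to Borel probability measures is asymptotically stable with exponential rate: there exist C > 0 and s ∈ (0,1) such that for every Borel probability measure μ on X and every n ∈ ℕ, sup{ | ∫_X L_f^n g dμ − ∫_X g dν | : g:X→ℝ with |g(x)−g(y)| ≤ d̄(x,y) for all x,y } ≤ C·s^n, where d̄(x,y) = min{1, 4·C_f·d_X(x,y)^α}; i.e. d(P^n μ, ν) ≤ C·s^n in the Wasserstein metric associated to d̄. -/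
open MeasureTheory Filter Topology BoundedContinuousFunction

noncomputable section

variable {E : Type*} [MetricSpace E]

variable [MeasurableSpace E] [BorelSpace E]

namespace St18

lemma min_dist_nonneg (x y : E) : 0 ≤ min (dist x y) 1 := le_min dist_nonneg zero_le_one

lemma summable_dX (x y : ℕ → E) :
    Summable (fun n : ℕ => ((1:ℝ)/2) ^ (n+1) * min (dist (x n) (y n)) 1) := by
  apply Summable.of_nonneg_of_le
    (fun n => mul_nonneg (by positivity) (min_dist_nonneg _ _))
    (fun n => ?_) summable_geometric_two
  calc ((1:ℝ)/2) ^ (n+1) * min (dist (x n) (y n)) 1 ≤ ((1:ℝ)/2) ^ (n+1) * 1 :=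
        mul_le_mul_of_nonneg_left (min_le_right _ _) (by positivity)
    _ ≤ ((1:ℝ)/2) ^ n := by rw [mul_one]; exact pow_le_pow_of_le_one (by norm_num) (by norm_num) (Nat.le_succ n)

lemma summable_half : Summable (fun n : ℕ => ((1:ℝ)/2) ^ (n+1)) := by
  simpa [pow_succ] using summable_geometric_two.mul_right (1/2 : ℝ)

lemma tsum_half : (∑' n : ℕ, ((1:ℝ)/2) ^ (n+1)) = 1 := by
  simp only [pow_succ]
  rw [tsum_mul_right, tsum_geometric_two]
  norm_num

lemma dX_nonneg (x y : ℕ → E) : 0 ≤ dX x y :=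
  tsum_nonneg fun n => mul_nonneg (by positivity) (min_dist_nonneg _ _)

lemma dX_le_one (x y : ℕ → E) : dX x y ≤ 1 := by
  rw [← tsum_half]
  exact Summable.tsum_le_tsum (fun n => by
    calc ((1:ℝ)/2) ^ (n+1) * min (dist (x n) (y n)) 1 ≤ ((1:ℝ)/2) ^ (n+1) * 1 :=
      mul_le_mul_of_nonneg_left (min_le_right _ _) (by positivity)
    _ = ((1:ℝ)/2) ^ (n+1) := mul_one _) (summable_dX x y) summable_half

lemma dX_symm (x y : ℕ → E) : dX x y = dX y x := by simp [dX, dist_comm]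

lemma dX_cons (a : E) (x y : ℕ → E) : dX (cons a x) (cons a y) = (1/2) * dX x y := by
  rw [dX, Summable.tsum_eq_zero_add (summable_dX _ _)]
  have h0 : ((1:ℝ)/2) ^ (0+1) * min (dist (cons a x 0) (cons a y 0)) 1 = 0 := by
    show ((1:ℝ)/2) ^ 1 * min (dist a a) 1 = 0
    simp
  rw [h0, zero_add]
  have h1 : ∀ n : ℕ, ((1:ℝ)/2) ^ (n+1+1) * min (dist (cons a x (n+1)) (cons a y (n+1))) 1
      = (1/2) * (((1:ℝ)/2) ^ (n+1) * min (dist (x n) (y n)) 1) := by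
    intro n
    show ((1:ℝ)/2) ^ (n+2) * min (dist (x n) (y n)) 1 = _
    ring
  rw [tsum_congr h1, tsum_mul_left]
  rfl

lemma prepend_nil (b : Fin 0 → E) (x : ℕ → E) : prepend b x = x := by
  funext k; simp [prepend]

lemma prepend_cons {n : ℕ} (a : E) (b : Fin n → E) (x : ℕ → E) :
    prepend (Fin.cons a b) x = cons a (prepend b x) := by
  funext k
  cases k with
  | zero =>
    show (if h : 0 < n+1 then (Fin.cons a b : Fin (n+1) → E) ⟨0, h⟩ else x (0 - (n+1))) = a
    rw [dif_pos (Nat.succ_pos n)]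
    exact Fin.cons_zero (α := fun _ : Fin (n+1) => E) a b
  | succ k =>
    show (if h : k+1 < n+1 then (Fin.cons a b : Fin (n+1) → E) ⟨k+1, h⟩ else x (k+1 - (n+1)))
        = prepend b x k
    by_cases hk : k < n
    · rw [dif_pos (Nat.succ_lt_succ hk)]
      show (Fin.cons a b : Fin (n+1) → E) (Fin.succ ⟨k, hk⟩) = prepend b x k
      rw [Fin.cons_succ]
      unfold prepend
      rw [dif_pos hk]
    · rw [dif_neg (fun h => hk (Nat.lt_of_succ_lt_succ h))]
      unfold prepend
      rw [dif_neg hk, Nat.succ_sub_succ]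

lemma dX_prepend {n : ℕ} (b : Fin n → E) (x y : ℕ → E) :
    dX (prepend b x) (prepend b y) = ((1:ℝ)/2)^n * dX x y := by
  induction n with
  | zero => simp [prepend_nil]
  | succ n ih =>
    have : b = Fin.cons (b 0) (Fin.tail b) := (Fin.cons_self_tail b).symm
    rw [this, prepend_cons, prepend_cons, dX_cons, ih (Fin.tail b)]
    ring

lemma shift_cons (a : E) (x : ℕ → E) : shift (cons a x) = x := by
  funext n; rfl

lemma birkhoff_zero (f : (ℕ → E) → ℝ) (x : ℕ → E) : birkhoff f 0 x = 0 := by simp [birkhoff]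

lemma birkhoff_succ' (f : (ℕ → E) → ℝ) (n : ℕ) (w : ℕ → E) :
    birkhoff f (n+1) w = f w + birkhoff f n (shift w) := by
  rw [birkhoff, Finset.sum_range_succ']
  simp only [Function.iterate_succ_apply, Function.iterate_zero_apply]
  rw [add_comm]
  rfl

lemma birkhoff_cons (f : (ℕ → E) → ℝ) (n : ℕ) (a : E) (z : ℕ → E) :
    birkhoff f (n+1) (cons a z) = f (cons a z) + birkhoff f n z := by
  rw [birkhoff_succ', shift_cons]

lemma birkhoff_abs_le (f : (ℕ → E) → ℝ) {M : ℝ} (hM : ∀ x, |f x| ≤ M) (n : ℕ) (w : ℕ → E) :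
    |birkhoff f n w| ≤ n * M := by
  calc |birkhoff f n w| ≤ ∑ k ∈ Finset.range n, |f (shift^[k] w)| :=
        Finset.abs_sum_le_sum_abs _ _
    _ ≤ ∑ _k ∈ Finset.range n, M := Finset.sum_le_sum fun k _ => hM _
    _ = n * M := by simp [mul_comm]

end St18

namespace St18

lemma continuous_cons_right (a : E) : Continuous fun x : ℕ → E => cons a x :=
  continuous_pi fun n => by
    cases n with
    | zero => exact continuous_const
    | succ n => exact continuous_apply n

lemma continuous_cons_left (x : ℕ → E) : Continuous fun a : E => cons a x :=
  continuous_pi fun n => by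
    cases n with
    | zero => exact continuous_id
    | succ n => exact continuous_const

lemma continuous_prepend_left {n : ℕ} (x : ℕ → E) :
    Continuous fun b : Fin n → E => prepend b x :=
  continuous_pi fun k => by
    by_cases h : k < n
    · simp only [prepend, dif_pos h]
      exact continuous_apply _
    · simp only [prepend, dif_neg h]
      exact continuous_const

lemma continuous_prepend_right {n : ℕ} (b : Fin n → E) :
    Continuous fun x : ℕ → E => prepend b x :=
  continuous_pi fun k => by
    by_cases h : k < n
    · simp only [prepend, dif_pos h]
      exact continuous_const
    · simp only [prepend, dif_neg h]
      exact continuous_apply _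

lemma continuous_finCons (n : ℕ) :
    Continuous fun q : E × (Fin n → E) => (Fin.cons q.1 q.2 : Fin (n+1) → E) :=
  continuous_pi fun k => by
    refine Fin.cases ?_ ?_ k
    · simp only [Fin.cons_zero]
      exact continuous_fst
    · intro i
      simp only [Fin.cons_succ]
      exact (continuous_apply i).comp continuous_snd

lemma continuous_shift_iterate (k : ℕ) : Continuous (shift^[k] : (ℕ → E) → (ℕ → E)) := by
  induction k with
  | zero => exact continuous_id
  | succ k ih => rw [Function.iterate_succ]; exact ih.comp continuous_shift

lemma continuous_birkhoff {f : (ℕ → E) → ℝ} (hf : Continuous f) (n : ℕ) :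
    Continuous (birkhoff f n) := by
  unfold birkhoff
  exact continuous_finset_sum _ fun k _ => hf.comp (continuous_shift_iterate k)

lemma integrable_of_bdd {γ : Type*} [MeasurableSpace γ] {μ : Measure γ} [IsFiniteMeasure μ]
    {F : γ → ℝ} (hm : AEStronglyMeasurable F μ) (M : ℝ) (hb : ∀ z, |F z| ≤ M) :
    Integrable F μ :=
  ⟨hm, HasFiniteIntegral.of_bounded (C := M) (ae_of_all _ fun z => by
    simpa [Real.norm_eq_abs] using hb z)⟩

end St18


namespace St18
section Ruelle

variable {E : Type*} [MetricSpace E] [MeasurableSpace E] [BorelSpace E]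
  [SecondCountableTopology E] [Nonempty E]
variable (p : Measure E) [IsProbabilityMeasure p] {f : (ℕ → E) → ℝ}

lemma integrand_cont {h : (ℕ → E) → ℝ} (hfc : Continuous f) (hc : Continuous h) (x : ℕ → E) :
    Continuous fun a : E => Real.exp (f (cons a x)) * h (cons a x) :=
  (Real.continuous_exp.comp (hfc.comp (continuous_cons_left x))).mul
    (hc.comp (continuous_cons_left x))

lemma integrand_bdd {h : (ℕ → E) → ℝ} {Mf M : ℝ} (hMf : ∀ x, |f x| ≤ Mf) (hM : ∀ x, |h x| ≤ M)
    (u : ℕ → E) : |Real.exp (f u) * h u| ≤ Real.exp Mf * M := by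
  rw [abs_mul, abs_of_pos (Real.exp_pos _)]
  exact mul_le_mul (Real.exp_le_exp.2 (le_of_abs_le (hMf u))) (hM u) (abs_nonneg _)
    (Real.exp_pos _).le

lemma memCb_ruelle {h : (ℕ → E) → ℝ} (hfc : Continuous f) {Mf : ℝ} (hMf : ∀ x, |f x| ≤ Mf)
    (hnorm : ∀ x, ruelle p f (fun _ => 1) x = 1) (hh : MemCb h) : MemCb (ruelle p f h) := by
  obtain ⟨hc, M, hM⟩ := hh
  have hM0 : 0 ≤ M := (abs_nonneg _).trans (hM (Classical.arbitrary _))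
  have hmeas : ∀ x : ℕ → E,
      AEStronglyMeasurable (fun a : E => Real.exp (f (cons a x)) * h (cons a x)) p :=
    fun x => (integrand_cont hfc hc x).aestronglyMeasurable
  have hint : ∀ x : ℕ → E, Integrable (fun a : E => Real.exp (f (cons a x)) * h (cons a x)) p :=
    fun x => integrable_of_bdd (hmeas x) (Real.exp Mf * M) (fun a => integrand_bdd hMf hM _)
  constructor
  · apply continuous_of_dominated hmeas
      (fun x => ae_of_all _ fun a => by
        rw [Real.norm_eq_abs]; exact integrand_bdd hMf hM _)
      (integrable_const _)
      (ae_of_all _ fun a =>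
        (Real.continuous_exp.comp (hfc.comp (continuous_cons_right a))).mul
          (hc.comp (continuous_cons_right a)))
  · refine ⟨M, fun x => ?_⟩
    have h1 : Integrable (fun a : E => Real.exp (f (cons a x))) p :=
      integrable_of_bdd ((Real.continuous_exp.comp
        (hfc.comp (continuous_cons_left x))).aestronglyMeasurable) (Real.exp Mf)
        (fun a => by
          rw [abs_of_pos (Real.exp_pos _)]
          exact Real.exp_le_exp.2 (le_of_abs_le (hMf _)))
    calc |ruelle p f h x| ≤ ∫ a, |Real.exp (f (cons a x)) * h (cons a x)| ∂p := by
          rw [ruelle]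
          exact (norm_integral_le_integral_norm
            (fun a : E => Real.exp (f (cons a x)) * h (cons a x)) (μ := p))
      _ ≤ ∫ a, Real.exp (f (cons a x)) * M ∂p := by
          refine integral_mono (hint x).abs (h1.mul_const M) (fun a => ?_)
          rw [abs_mul, abs_of_pos (Real.exp_pos _)]
          exact mul_le_mul_of_nonneg_left (hM _) (Real.exp_pos _).le
      _ = (∫ a, Real.exp (f (cons a x)) ∂p) * M := integral_mul_const _ _
      _ = (ruelle p f (fun _ => 1) x) * M := by rw [ruelle]; simp
      _ = M := by rw [hnorm x, one_mul]

lemma ruelle_iter_one (hnorm : ∀ x, ruelle p f (fun _ => 1) x = 1) (n : ℕ) :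
    (ruelle p f)^[n] (fun _ => 1) = fun _ => (1:ℝ) := by
  induction n with
  | zero => rfl
  | succ n ih =>
    rw [Function.iterate_succ_apply, show ruelle p f (fun _ => 1) = fun _ => (1:ℝ) from
      funext hnorm, ih]

lemma memCb_iter {h : (ℕ → E) → ℝ} (hfc : Continuous f) {Mf : ℝ} (hMf : ∀ x, |f x| ≤ Mf)
    (hnorm : ∀ x, ruelle p f (fun _ => 1) x = 1) (hh : MemCb h) (n : ℕ) :
    MemCb ((ruelle p f)^[n] h) := by
  induction n with
  | zero => exact hh
  | succ n ih =>
    rw [Function.iterate_succ_apply']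
    exact memCb_ruelle p hfc hMf hnorm ih

end Ruelle
end St18


namespace St18
section Rep

variable {E : Type*} [MetricSpace E] [MeasurableSpace E] [BorelSpace E]
  [SecondCountableTopology E] [Nonempty E]
variable (p : Measure E) [IsProbabilityMeasure p] {f : (ℕ → E) → ℝ}

set_option maxHeartbeats 1000000 in
lemma rep (hfc : Continuous f) {Mf : ℝ} (hMf : ∀ x, |f x| ≤ Mf)
    (hnorm : ∀ x, ruelle p f (fun _ => 1) x = 1) (n : ℕ) (x : ℕ → E)
    (h : (ℕ → E) → ℝ) (hh : MemCb h) :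
    (ruelle p f)^[n] h x
      = ∫ b : Fin n → E, Real.exp (birkhoff f n (prepend b x)) * h (prepend b x)
          ∂(Measure.pi fun _ : Fin n => p) := by
  induction n generalizing h with
  | zero =>
    simp only [Function.iterate_zero, id_eq, birkhoff_zero, prepend_nil, Real.exp_zero, one_mul]
    rw [integral_const]
    simp [measure_univ]
  | succ n ih =>
    obtain ⟨hc, M, hM⟩ := hh
    have hh' : MemCb (ruelle p f h) := memCb_ruelle p hfc hMf hnorm ⟨hc, M, hM⟩
    rw [Function.iterate_succ_apply, ih (ruelle p f h) hh']
    set G : (Fin (n+1) → E) → ℝ :=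
      fun c => Real.exp (birkhoff f (n+1) (prepend c x)) * h (prepend c x) with hG
    have hGc : Continuous G :=
      (Real.continuous_exp.comp ((continuous_birkhoff hfc (n+1)).comp
        (continuous_prepend_left x))).mul (hc.comp (continuous_prepend_left x))
    have hGb : ∀ c, |G c| ≤ Real.exp (((n+1 : ℕ) : ℝ) * Mf) * |M| := by
      intro c
      rw [hG, abs_mul, abs_of_pos (Real.exp_pos _)]
      exact mul_le_mul (Real.exp_le_exp.2 (le_of_abs_le (birkhoff_abs_le f hMf (n+1) _)))
        ((hM _).trans (le_abs_self M)) (abs_nonneg _) (Real.exp_pos _).le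
    have hprod_int : Integrable (fun q : E × (Fin n → E) => G (Fin.cons q.1 q.2))
        (p.prod (Measure.pi fun _ : Fin n => p)) :=
      integrable_of_bdd ((hGc.comp (continuous_finCons n)).aestronglyMeasurable) _
        (fun q => hGb _)
    have hswap_int : Integrable
        (Function.uncurry fun (b : Fin n → E) (a : E) => G (Fin.cons a b))
        ((Measure.pi fun _ : Fin n => p).prod p) :=
      integrable_of_bdd ((hGc.comp ((continuous_finCons n).comp
        continuous_swap)).aestronglyMeasurable) _ (fun q => hGb _)
    calc ∫ b : Fin n → E, Real.exp (birkhoff f n (prepend b x)) *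
            (ruelle p f h) (prepend b x) ∂(Measure.pi fun _ : Fin n => p)
        = ∫ b : Fin n → E, ∫ a : E, G (Fin.cons a b) ∂p ∂(Measure.pi fun _ : Fin n => p) := by
          refine integral_congr_ae (ae_of_all _ fun b => ?_)
          simp only [ruelle]
          rw [← integral_const_mul]
          refine integral_congr_ae (ae_of_all _ fun a => ?_)
          simp only [hG]
          rw [prepend_cons, birkhoff_cons, Real.exp_add]
          ring
      _ = ∫ a : E, ∫ b : Fin n → E, G (Fin.cons a b) ∂(Measure.pi fun _ : Fin n => p) ∂p :=
          integral_integral_swap hswap_int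
      _ = ∫ q : E × (Fin n → E), G (Fin.cons q.1 q.2) ∂(p.prod (Measure.pi fun _ : Fin n => p)) :=
          (integral_prod _ hprod_int).symm
      _ = ∫ c : Fin (n+1) → E, G c ∂(Measure.pi fun _ : Fin (n+1) => p) := by
          have mp := (measurePreserving_piFinSuccAbove (fun _ : Fin (n+1) => p) 0)
          rw [← mp.integral_comp (MeasurableEquiv.measurableEmbedding _)
            (fun q : E × (Fin n → E) => G (Fin.cons q.1 q.2))]
          refine integral_congr_ae (ae_of_all _ fun c => ?_)
          refine congrArg G ?_
          funext k
          refine Fin.cases ?_ (fun i => ?_) k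
          · rw [Fin.cons_zero]; rfl
          · rw [Fin.cons_succ]
            show c (Fin.succAbove 0 i) = c i.succ
            rw [Fin.zero_succAbove]

end Rep
end St18


namespace St18
section Key

variable {E : Type*} [MetricSpace E] [MeasurableSpace E] [BorelSpace E]
  [SecondCountableTopology E] [Nonempty E]
variable (p : Measure E) [IsProbabilityMeasure p] {f : (ℕ → E) → ℝ}

lemma rho_int (hfc : Continuous f) {Mf : ℝ} (hMf : ∀ x, |f x| ≤ Mf)
    (hnorm : ∀ x, ruelle p f (fun _ => 1) x = 1) (n : ℕ) (x : ℕ → E) :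
    ∫ b : Fin n → E, Real.exp (birkhoff f n (prepend b x)) ∂(Measure.pi fun _ : Fin n => p)
      = 1 := by
  have h := rep p hfc hMf hnorm n x (fun _ => 1)
    ⟨continuous_const, 1, fun _ => by norm_num⟩
  rw [ruelle_iter_one p hnorm] at h
  simpa using h.symm

lemma key (hfc : Continuous f) {Mf : ℝ} (hMf : ∀ x, |f x| ≤ Mf)
    (hnorm : ∀ x, ruelle p f (fun _ => 1) x = 1)
    {Cf α : ℝ} (hCf : 0 < Cf) (hα0 : 0 < α)
    (hdist : ∀ (n : ℕ) (a : Fin n → E) (x y : ℕ → E),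
      |1 - Real.exp (birkhoff f n (prepend a y) - birkhoff f n (prepend a x))|
        ≤ Cf * dX x y ^ α)
    {h : (ℕ → E) → ℝ} (hh : MemCb h) {κ : ℝ} (hκ : 0 ≤ κ)
    (hLip : ∀ u v, |h u - h v| ≤ κ * dbar Cf α u v)
    (n : ℕ) (x y : ℕ → E) :
    |(ruelle p f)^[n] h x - (ruelle p f)^[n] h y|
      ≤ κ * min 1 (4 * Cf * (((1:ℝ)/2)^n * dX x y) ^ α)
        + (κ/2) * min (2 * (Cf / (1 + Cf))) (Cf * dX x y ^ α) := by
  obtain ⟨hc, M, hM⟩ := hh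
  -- midpoint value
  have hne : (Set.range h).Nonempty := ⟨h x, Set.mem_range_self x⟩
  have hbddA : BddAbove (Set.range h) := ⟨M, by rintro r ⟨u, rfl⟩; exact le_of_abs_le (hM u)⟩
  have hbddB : BddBelow (Set.range h) := ⟨-M, by rintro r ⟨u, rfl⟩; exact neg_le_of_abs_le (hM u)⟩
  set S := sSup (Set.range h) with hS
  set I := sInf (Set.range h) with hI
  set c := (S + I) / 2 with hcdef
  have hosc : ∀ u v : ℕ → E, |h u - h v| ≤ κ := by
    intro u v
    refine (hLip u v).trans ?_
    calc κ * dbar Cf α u v ≤ κ * 1 := mul_le_mul_of_nonneg_left (min_le_left _ _) hκ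
      _ = κ := mul_one κ
  have hSI : S - I ≤ κ := by
    have h1 : S ≤ I + κ := by
      refine csSup_le hne ?_
      rintro r ⟨u, rfl⟩
      have h2 : h u - κ ≤ I := by
        refine le_csInf hne ?_
        rintro r ⟨v, rfl⟩
        have := (abs_le.1 (hosc u v)).2
        linarith
      linarith
    linarith
  have hmid : ∀ u, |h u - c| ≤ κ / 2 := by
    intro u
    have h1 : h u ≤ S := le_csSup hbddA (Set.mem_range_self u)
    have h2 : I ≤ h u := csInf_le hbddB (Set.mem_range_self u)
    refine abs_le.2 ⟨?_, ?_⟩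
    · rw [hcdef]; linarith
    · rw [hcdef]; linarith
  -- setup
  have hd0 : 0 ≤ dX x y := dX_nonneg x y
  have ht0 : 0 ≤ dX x y ^ α := Real.rpow_nonneg hd0 α
  have ht1 : dX x y ^ α ≤ 1 := Real.rpow_le_one hd0 (dX_le_one x y) hα0.le
  have hγ0 : (0:ℝ) < 1 + Cf := by linarith
  set γ := Cf / (1 + Cf) with hγdef
  -- the two weight functions
  set ρx : (Fin n → E) → ℝ := fun b => Real.exp (birkhoff f n (prepend b x)) with hρx
  set ρy : (Fin n → E) → ℝ := fun b => Real.exp (birkhoff f n (prepend b y)) with hρy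
  have hρxpos : ∀ b, 0 < ρx b := fun b => Real.exp_pos _
  have hρypos : ∀ b, 0 < ρy b := fun b => Real.exp_pos _
  set R := Real.exp ((n : ℝ) * Mf) with hR
  have hρxB : ∀ b, ρx b ≤ R :=
    fun b => Real.exp_le_exp.2 (le_of_abs_le (birkhoff_abs_le f hMf n _))
  have hρyB : ∀ b, ρy b ≤ R :=
    fun b => Real.exp_le_exp.2 (le_of_abs_le (birkhoff_abs_le f hMf n _))
  have hρxc : Continuous ρx := Real.continuous_exp.comp
    ((continuous_birkhoff hfc n).comp (continuous_prepend_left x))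
  have hρyc : Continuous ρy := Real.continuous_exp.comp
    ((continuous_birkhoff hfc n).comp (continuous_prepend_left y))
  have hM0 : 0 ≤ M := (abs_nonneg _).trans (hM x)
  -- pointwise bounds on the weight differences
  have hr1 : ∀ b, |ρx b - ρy b| ≤ ρx b * (Cf * dX x y ^ α) := by
    intro b
    have hexp : ρy b = ρx b * Real.exp (birkhoff f n (prepend b y) - birkhoff f n (prepend b x)) := by
      simp only [hρx, hρy]
      rw [← Real.exp_add]
      congr 1
      ring
    have : ρx b - ρy b
        = ρx b * (1 - Real.exp (birkhoff f n (prepend b y) - birkhoff f n (prepend b x))) := by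
      rw [hexp]; ring
    rw [this, abs_mul, abs_of_pos (hρxpos b)]
    exact mul_le_mul_of_nonneg_left (hdist n b x y) (hρxpos b).le
  have hxy : ∀ b, ρx b ≤ (1 + Cf) * ρy b := by
    intro b
    have hd : |1 - Real.exp (birkhoff f n (prepend b x) - birkhoff f n (prepend b y))|
        ≤ Cf * dX y x ^ α := hdist n b y x
    rw [← dX_symm] at hd
    have h2 : Real.exp (birkhoff f n (prepend b x) - birkhoff f n (prepend b y)) ≤ 1 + Cf := by
      have h5 := (abs_le.1 hd).1
      have h3 : Cf * dX x y ^ α ≤ Cf := by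
        calc Cf * dX x y ^ α ≤ Cf * 1 := mul_le_mul_of_nonneg_left ht1 hCf.le
          _ = Cf := mul_one Cf
      linarith
    have hexp : ρx b = ρy b * Real.exp (birkhoff f n (prepend b x) - birkhoff f n (prepend b y)) := by
      simp only [hρx, hρy]
      rw [← Real.exp_add]
      congr 1
      ring
    rw [hexp, mul_comm (1 + Cf) (ρy b)]
    exact mul_le_mul_of_nonneg_left h2 (hρypos b).le
  have hyx : ∀ b, ρy b ≤ (1 + Cf) * ρx b := by
    intro b
    have hd := hdist n b x y
    have h2 : Real.exp (birkhoff f n (prepend b y) - birkhoff f n (prepend b x)) ≤ 1 + Cf := by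
      have h5 := (abs_le.1 hd).1
      have h3 : Cf * dX x y ^ α ≤ Cf := by
        calc Cf * dX x y ^ α ≤ Cf * 1 := mul_le_mul_of_nonneg_left ht1 hCf.le
          _ = Cf := mul_one Cf
      linarith
    have hexp : ρy b = ρx b * Real.exp (birkhoff f n (prepend b y) - birkhoff f n (prepend b x)) := by
      simp only [hρx, hρy]
      rw [← Real.exp_add]
      congr 1
      ring
    rw [hexp, mul_comm (1 + Cf) (ρx b)]
    exact mul_le_mul_of_nonneg_left h2 (hρxpos b).le
  have hr2 : ∀ b, |ρx b - ρy b| ≤ γ * (ρx b + ρy b) := by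
    intro b
    rw [abs_sub_le_iff]
    constructor
    · rw [hγdef, div_mul_eq_mul_div, le_div_iff₀ hγ0]
      nlinarith [hxy b, (hρypos b).le, (hρxpos b).le]
    · rw [hγdef, div_mul_eq_mul_div, le_div_iff₀ hγ0]
      nlinarith [hyx b, (hρypos b).le, (hρxpos b).le]
  -- Lipschitz bound at the prepended points
  set K1 := min 1 (4 * Cf * (((1:ℝ)/2)^n * dX x y) ^ α) with hK1def
  have hK1nonneg : 0 ≤ K1 := le_min zero_le_one (by positivity)
  have hdbar_eq : ∀ b : Fin n → E, dbar Cf α (prepend b x) (prepend b y) = K1 := by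
    intro b
    rw [dbar, dX_prepend, hK1def]
  -- integrands
  set F1 : (Fin n → E) → ℝ := fun b => ρx b * (h (prepend b x) - h (prepend b y)) with hF1
  set F2 : (Fin n → E) → ℝ := fun b => (ρx b - ρy b) * (h (prepend b y) - c) with hF2
  have hF1c : Continuous F1 := hρxc.mul ((hc.comp (continuous_prepend_left x)).sub
    (hc.comp (continuous_prepend_left y)))
  have hF2c : Continuous F2 := (hρxc.sub hρyc).mul
    ((hc.comp (continuous_prepend_left y)).sub continuous_const)
  have hF1b : ∀ b, |F1 b| ≤ ρx b * (κ * K1) := by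
    intro b
    rw [hF1, abs_mul, abs_of_pos (hρxpos b)]
    refine mul_le_mul_of_nonneg_left ?_ (hρxpos b).le
    have := hLip (prepend b x) (prepend b y)
    rwa [hdbar_eq b] at this
  have hF2b : ∀ b, |F2 b| ≤ |ρx b - ρy b| * (κ / 2) := by
    intro b
    rw [hF2, abs_mul]
    exact mul_le_mul_of_nonneg_left (hmid _) (abs_nonneg _)
  -- integrability
  have mk : ∀ (F : (Fin n → E) → ℝ), Continuous F → ∀ B : ℝ, (∀ b, |F b| ≤ B) →
      Integrable F (Measure.pi fun _ : Fin n => p) :=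
    fun F hF B hB => integrable_of_bdd hF.aestronglyMeasurable B hB
  have hF1int : Integrable F1 (Measure.pi fun _ : Fin n => p) :=
    mk F1 hF1c (R * (κ * K1)) fun b =>
      (hF1b b).trans (mul_le_mul_of_nonneg_right (hρxB b) (by positivity))
  have hF2int : Integrable F2 (Measure.pi fun _ : Fin n => p) :=
    mk F2 hF2c ((R + R) * (κ / 2)) fun b => (hF2b b).trans
      (mul_le_mul_of_nonneg_right (abs_le.2
        ⟨by linarith [hρxB b, hρyB b, hρxpos b, hρypos b],
         by linarith [hρxB b, hρyB b, hρxpos b, hρypos b]⟩) (by positivity))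
  have hρxint : Integrable ρx (Measure.pi fun _ : Fin n => p) :=
    mk ρx hρxc R fun b => by rw [abs_of_pos (hρxpos b)]; exact hρxB b
  have hρyint : Integrable ρy (Measure.pi fun _ : Fin n => p) :=
    mk ρy hρyc R fun b => by rw [abs_of_pos (hρypos b)]; exact hρyB b
  have hXint : Integrable (fun b => ρx b * h (prepend b x)) (Measure.pi fun _ : Fin n => p) :=
    mk _ (hρxc.mul (hc.comp (continuous_prepend_left x))) (R * M) fun b => by
      rw [abs_mul, abs_of_pos (hρxpos b)]
      exact mul_le_mul (hρxB b) (hM _) (abs_nonneg _) ((hρxpos b).le.trans (hρxB b))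
  have hYint : Integrable (fun b => ρy b * h (prepend b y)) (Measure.pi fun _ : Fin n => p) :=
    mk _ (hρyc.mul (hc.comp (continuous_prepend_left y))) (R * M) fun b => by
      rw [abs_mul, abs_of_pos (hρypos b)]
      exact mul_le_mul (hρyB b) (hM _) (abs_nonneg _) ((hρypos b).le.trans (hρyB b))
  -- decomposition
  rw [rep p hfc hMf hnorm n x h ⟨hc, M, hM⟩, rep p hfc hMf hnorm n y h ⟨hc, M, hM⟩]
  have hsplit : (∫ b : Fin n → E, Real.exp (birkhoff f n (prepend b x)) * h (prepend b x)
        ∂(Measure.pi fun _ : Fin n => p))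
      - (∫ b : Fin n → E, Real.exp (birkhoff f n (prepend b y)) * h (prepend b y)
        ∂(Measure.pi fun _ : Fin n => p))
      = (∫ b, F1 b ∂(Measure.pi fun _ : Fin n => p))
        + (∫ b, F2 b ∂(Measure.pi fun _ : Fin n => p)) := by
    have i12 : Integrable (fun b => F1 b + F2 b) (Measure.pi fun _ : Fin n => p) :=
      hF1int.add hF2int
    have icd : Integrable (fun b => c * (ρx b - ρy b)) (Measure.pi fun _ : Fin n => p) :=
      (hρxint.sub hρyint).const_mul c
    rw [← integral_sub hXint hYint]
    calc ∫ b, ρx b * h (prepend b x) - ρy b * h (prepend b y) ∂(Measure.pi fun _ : Fin n => p)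
        = ∫ b, (F1 b + F2 b) + c * (ρx b - ρy b) ∂(Measure.pi fun _ : Fin n => p) := by
          refine integral_congr_ae (ae_of_all _ fun b => ?_)
          simp only [hF1, hF2]
          ring
      _ = (∫ b, F1 b ∂(Measure.pi fun _ : Fin n => p))
            + (∫ b, F2 b ∂(Measure.pi fun _ : Fin n => p))
            + c * ((∫ b, ρx b ∂(Measure.pi fun _ : Fin n => p))
              - ∫ b, ρy b ∂(Measure.pi fun _ : Fin n => p)) := by
          rw [integral_add i12 icd, integral_add hF1int hF2int, integral_const_mul,
            integral_sub hρxint hρyint]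
      _ = (∫ b, F1 b ∂(Measure.pi fun _ : Fin n => p))
            + ∫ b, F2 b ∂(Measure.pi fun _ : Fin n => p) := by
          rw [hρx, hρy, rho_int p hfc hMf hnorm n x, rho_int p hfc hMf hnorm n y]
          ring
  rw [hsplit]
  -- bound the two pieces
  have hB1 : |∫ b, F1 b ∂(Measure.pi fun _ : Fin n => p)| ≤ κ * K1 := by
    calc |∫ b, F1 b ∂(Measure.pi fun _ : Fin n => p)|
        ≤ ∫ b, |F1 b| ∂(Measure.pi fun _ : Fin n => p) :=
          norm_integral_le_integral_norm F1
      _ ≤ ∫ b, ρx b * (κ * K1) ∂(Measure.pi fun _ : Fin n => p) :=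
          integral_mono hF1int.abs (hρxint.mul_const _) hF1b
      _ = (∫ b, ρx b ∂(Measure.pi fun _ : Fin n => p)) * (κ * K1) := integral_mul_const _ _
      _ = κ * K1 := by rw [hρx, rho_int p hfc hMf hnorm n x, one_mul]
  have hdiffint : Integrable (fun b => |ρx b - ρy b|) (Measure.pi fun _ : Fin n => p) :=
    (hρxint.sub hρyint).abs
  have hD1 : (∫ b, |ρx b - ρy b| ∂(Measure.pi fun _ : Fin n => p)) ≤ Cf * dX x y ^ α := by
    calc (∫ b, |ρx b - ρy b| ∂(Measure.pi fun _ : Fin n => p))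
        ≤ ∫ b, ρx b * (Cf * dX x y ^ α) ∂(Measure.pi fun _ : Fin n => p) :=
          integral_mono hdiffint (hρxint.mul_const _) hr1
      _ = (∫ b, ρx b ∂(Measure.pi fun _ : Fin n => p)) * (Cf * dX x y ^ α) :=
          integral_mul_const _ _
      _ = Cf * dX x y ^ α := by rw [hρx, rho_int p hfc hMf hnorm n x, one_mul]
  have hD2 : (∫ b, |ρx b - ρy b| ∂(Measure.pi fun _ : Fin n => p)) ≤ 2 * γ := by
    calc (∫ b, |ρx b - ρy b| ∂(Measure.pi fun _ : Fin n => p))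
        ≤ ∫ b, γ * (ρx b + ρy b) ∂(Measure.pi fun _ : Fin n => p) :=
          integral_mono hdiffint ((hρxint.add hρyint).const_mul γ) hr2
      _ = γ * ((∫ b, ρx b ∂(Measure.pi fun _ : Fin n => p))
            + ∫ b, ρy b ∂(Measure.pi fun _ : Fin n => p)) := by
          rw [integral_const_mul, integral_add hρxint hρyint]
      _ = 2 * γ := by
          rw [hρx, hρy, rho_int p hfc hMf hnorm n x, rho_int p hfc hMf hnorm n y]
          ring
  have hB2 : |∫ b, F2 b ∂(Measure.pi fun _ : Fin n => p)|
      ≤ (κ/2) * min (2 * γ) (Cf * dX x y ^ α) := by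
    calc |∫ b, F2 b ∂(Measure.pi fun _ : Fin n => p)|
        ≤ ∫ b, |F2 b| ∂(Measure.pi fun _ : Fin n => p) := norm_integral_le_integral_norm F2
      _ ≤ ∫ b, |ρx b - ρy b| * (κ/2) ∂(Measure.pi fun _ : Fin n => p) :=
          integral_mono hF2int.abs (hdiffint.mul_const _) hF2b
      _ = (∫ b, |ρx b - ρy b| ∂(Measure.pi fun _ : Fin n => p)) * (κ/2) :=
          integral_mul_const _ _
      _ ≤ min (2 * γ) (Cf * dX x y ^ α) * (κ/2) :=
          mul_le_mul_of_nonneg_right (le_min hD2 hD1) (by positivity)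
      _ = (κ/2) * min (2 * γ) (Cf * dX x y ^ α) := mul_comm _ _
  calc |(∫ b, F1 b ∂(Measure.pi fun _ : Fin n => p))
        + ∫ b, F2 b ∂(Measure.pi fun _ : Fin n => p)|
      ≤ |∫ b, F1 b ∂(Measure.pi fun _ : Fin n => p)|
        + |∫ b, F2 b ∂(Measure.pi fun _ : Fin n => p)| := abs_add_le _ _
    _ ≤ κ * K1 + (κ/2) * min (2 * γ) (Cf * dX x y ^ α) := add_le_add hB1 hB2

end Key
end St18


namespace St18
section Final

variable {E : Type*} [MetricSpace E] [MeasurableSpace E] [BorelSpace E]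

lemma dX_self (x : ℕ → E) : dX x x = 0 := by
  have : ∀ n : ℕ, ((1:ℝ)/2) ^ (n+1) * min (dist (x n) (x n)) 1 = 0 := by
    intro n
    rw [dist_self, min_eq_left zero_le_one, mul_zero]
  rw [dX, tsum_congr this, tsum_zero]

lemma continuous_dX_right (x₀ : ℕ → E) : Continuous fun x : ℕ → E => dX x x₀ := by
  apply continuous_tsum (u := fun n : ℕ => ((1:ℝ)/2)^n)
  · exact fun n => continuous_const.mul (((continuous_apply n).dist continuous_const).min
      continuous_const)
  · exact summable_geometric_two
  · intro n x
    rw [Real.norm_eq_abs, abs_of_nonneg (mul_nonneg (by positivity) (min_dist_nonneg _ _))]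
    calc ((1:ℝ)/2) ^ (n+1) * min (dist (x n) (x₀ n)) 1 ≤ ((1:ℝ)/2) ^ (n+1) * 1 :=
          mul_le_mul_of_nonneg_left (min_le_right _ _) (by positivity)
      _ ≤ ((1:ℝ)/2) ^ n := by
          rw [mul_one]
          exact pow_le_pow_of_le_one (by norm_num) (by norm_num) (Nat.le_succ n)

lemma continuous_of_dbar {Cf α : ℝ} (hCf : 0 < Cf) (hα0 : 0 < α) {g : (ℕ → E) → ℝ}
    (hg : ∀ x y, |g x - g y| ≤ dbar Cf α x y) : Continuous g := by
  rw [continuous_iff_continuousAt]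
  intro x₀
  have h0 : Tendsto (fun x => dX x x₀) (𝓝 x₀) (𝓝 0) := by
    have := (continuous_dX_right x₀).tendsto x₀
    rwa [dX_self] at this
  have h2 : Tendsto (fun t : ℝ => 4 * Cf * t ^ α) (𝓝 0) (𝓝 0) := by
    have h3 : ContinuousAt (fun t : ℝ => t ^ α) 0 :=
      Real.continuousAt_rpow_const 0 α (Or.inr hα0.le)
    have h4 := h3.tendsto
    rw [Real.zero_rpow hα0.ne'] at h4
    simpa using h4.const_mul (4 * Cf)
  have h1 : Tendsto (fun x => 4 * Cf * dX x x₀ ^ α) (𝓝 x₀) (𝓝 0) := h2.comp h0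
  have h5 : Tendsto (fun x => g x - g x₀) (𝓝 x₀) (𝓝 0) :=
    squeeze_zero_norm (fun x => (hg x x₀).trans (min_le_right _ _)) h1
  have h6 := h5.add (tendsto_const_nhds (x := g x₀))
  rw [zero_add] at h6
  unfold ContinuousAt
  convert h6 using 2 with x
  ring

lemma rpow_split (n : ℕ) {d α : ℝ} (hd : 0 ≤ d) :
    (((1:ℝ)/2) ^ n * d) ^ α = (((1:ℝ)/2) ^ α) ^ n * d ^ α := by
  rw [Real.mul_rpow (by positivity) hd]
  congr 1
  rw [← Real.rpow_natCast ((1:ℝ)/2) n, ← Real.rpow_mul (by norm_num), mul_comm,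
    Real.rpow_mul (by norm_num), Real.rpow_natCast]

lemma arith {Cf q t : ℝ} (hCf : 0 < Cf) (hq0 : 0 ≤ q) (hq1 : q ≤ 1/8)
    (hq2 : 4 * Cf * q ≤ (1 - Cf / (1 + Cf)) / 2) (ht0 : 0 ≤ t) (ht1 : t ≤ 1) :
    min 1 (4 * Cf * (q * t)) + (1/2) * min (2 * (Cf / (1 + Cf))) (Cf * t)
      ≤ (max (1/4 : ℝ) ((1 + Cf / (1 + Cf)) / 2)) * min 1 (4 * Cf * t) := by
  have h1γ : (0:ℝ) < 1 + Cf := by linarith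
  set γ := Cf / (1 + Cf) with hγ
  have hγ0 : 0 ≤ γ := by positivity
  have hγ1 : γ < 1 := by rw [hγ, div_lt_one h1γ]; linarith
  have hθ1 : (1/4 : ℝ) ≤ max (1/4 : ℝ) ((1 + γ)/2) := le_max_left _ _
  have hθ2 : (1 + γ)/2 ≤ max (1/4 : ℝ) ((1 + γ)/2) := le_max_right _ _
  rcases le_total (4 * Cf * t) 1 with hA | hB
  · rw [min_eq_right hA]
    have e1 : min 1 (4 * Cf * (q * t)) ≤ 4 * Cf * (q * t) := min_le_right _ _
    have e2 : min (2 * γ) (Cf * t) ≤ Cf * t := min_le_right _ _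
    have hCt : 0 ≤ Cf * t := mul_nonneg hCf.le ht0
    have e4 : 4 * Cf * (q * t) ≤ (1/2) * (Cf * t) := by
      nlinarith [mul_le_mul_of_nonneg_right hq1 hCt]
    have e5 : (1/4) * (4 * Cf * t) ≤ max (1/4 : ℝ) ((1 + γ)/2) * (4 * Cf * t) :=
      mul_le_mul_of_nonneg_right hθ1 (by nlinarith)
    linarith
  · rw [min_eq_left hB, mul_one]
    have e1 : min 1 (4 * Cf * (q * t)) ≤ 4 * Cf * (q * t) := min_le_right _ _
    have e2 : min (2 * γ) (Cf * t) ≤ 2 * γ := min_le_left _ _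
    have e3 : 4 * Cf * (q * t) ≤ 4 * Cf * q := by
      nlinarith [mul_nonneg (mul_nonneg hCf.le hq0) (sub_nonneg.2 ht1)]
    linarith

end Final
end St18


/-- Exponential asymptotic stability of the Markov operator
`P = L_f^*` for a normalized bounded Hölder potential: `d(Pⁿμ, ν) ≤ C sⁿ` in the
Wasserstein metric associated to `d̄(x,y) = min{1, 4 C_f d_X(x,y)^α}`. -/
theorem statement18 {E : Type*} [MetricSpace E] [CompleteSpace E]
    [TopologicalSpace.SeparableSpace E] [MeasurableSpace E] [BorelSpace E] [Nonempty E]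
    (p : Measure E) [IsProbabilityMeasure p]
    (α : ℝ) (hα0 : 0 < α) (hα1 : α < 1)
    (f : (ℕ → E) → ℝ) (hf : MemHol α f)
    (hnormalized : ∀ x, ruelle p f (fun _ => 1) x = 1)
    (Cf : ℝ) (hCf : 0 < Cf)
    (hdist : ∀ (n : ℕ) (a : Fin n → E) (x y : ℕ → E),
      |1 - Real.exp (birkhoff f n (prepend a y) - birkhoff f n (prepend a x))|
        ≤ Cf * dX x y ^ α)
    (ν : Measure (ℕ → E)) (hν : IsProbabilityMeasure ν)
    (hconf : ∀ φ : (ℕ → E) → ℝ, MemCb φ → (∫ x, ruelle p f φ x ∂ν) = ∫ x, φ x ∂ν)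
    (huniq : ∀ ν' : Measure (ℕ → E), IsProbabilityMeasure ν' →
      (∀ φ : (ℕ → E) → ℝ, MemCb φ → (∫ x, ruelle p f φ x ∂ν') = ∫ x, φ x ∂ν') →
      ν' = ν) :
    ∃ C s : ℝ, 0 < C ∧ 0 < s ∧ s < 1 ∧
      ∀ μ : Measure (ℕ → E), IsProbabilityMeasure μ → ∀ n : ℕ,
        ∀ g : (ℕ → E) → ℝ, (∀ x y, |g x - g y| ≤ dbar Cf α x y) →
          |(∫ x, (ruelle p f)^[n] g x ∂μ) - ∫ x, g x ∂ν| ≤ C * s ^ n := by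
  classical
  haveI : SecondCountableTopology E := UniformSpace.secondCountable_of_separable E
  haveI := hν
  obtain ⟨hfc, ⟨Mf, hMf⟩, -⟩ := hf
  have h1γ : (0:ℝ) < 1 + Cf := by linarith
  set γ := Cf / (1 + Cf) with hγdef
  have hγ0 : 0 ≤ γ := by positivity
  have hγ1 : γ < 1 := by rw [hγdef, div_lt_one h1γ]; linarith
  set q : ℝ := ((1:ℝ)/2) ^ α with hqdef
  have hq0 : 0 < q := Real.rpow_pos_of_pos (by norm_num) α
  have hqlt : q < 1 := Real.rpow_lt_one (by norm_num) (by norm_num) hα0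
  obtain ⟨N, hN⟩ := exists_pow_lt_of_lt_one
    (x := min ((1:ℝ)/8) ((1 - γ)/(8*Cf))) (lt_min (by norm_num) (div_pos (by linarith) (by positivity))) hqlt
  have hqN0 : 0 ≤ q ^ N := (pow_pos hq0 N).le
  have hq1 : q ^ N ≤ 1/8 := hN.le.trans (min_le_left _ _)
  have hq2 : 4 * Cf * q ^ N ≤ (1 - γ)/2 := by
    have h2 : q ^ N ≤ (1 - γ)/(8*Cf) := hN.le.trans (min_le_right _ _)
    have h3 := mul_le_mul_of_nonneg_left h2 (by positivity : (0:ℝ) ≤ 8*Cf)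
    have h4 : 8*Cf*((1 - γ)/(8*Cf)) = 1 - γ := by field_simp
    rw [h4] at h3
    linarith
  have hN0 : 0 < N := by
    rcases Nat.eq_zero_or_pos N with h | h
    · exfalso; rw [h, pow_zero] at hq1; norm_num at hq1
    · exact h
  set θ := max (1/4 : ℝ) ((1 + γ)/2) with hθdef
  have hθ0 : (0:ℝ) < θ := lt_of_lt_of_le (by norm_num) (le_max_left _ _)
  have hθ1 : θ < 1 := max_lt (by norm_num) (by linarith)
  set s := θ ^ ((N:ℝ)⁻¹) with hsdef
  have hNR : (0:ℝ) < (N:ℝ) := Nat.cast_pos.2 hN0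
  have hs0 : 0 < s := Real.rpow_pos_of_pos hθ0 _
  have hs1 : s < 1 := Real.rpow_lt_one hθ0.le hθ1 (inv_pos.2 hNR)
  refine ⟨4/θ, s, div_pos (by norm_num) hθ0, hs0, hs1, ?_⟩
  intro μ hμ n g hg
  haveI := hμ
  have hgc : Continuous g := St18.continuous_of_dbar hCf hα0 hg
  have x₀ : ℕ → E := Classical.arbitrary _
  have hgB : ∀ u, |g u| ≤ |g x₀| + 1 := by
    intro u
    have h1 := hg u x₀
    have h2 : dbar Cf α u x₀ ≤ 1 := min_le_left _ _
    calc |g u| = |(g u - g x₀) + g x₀| := by ring_nf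
      _ ≤ |g u - g x₀| + |g x₀| := abs_add_le _ _
      _ ≤ |g x₀| + 1 := by linarith
  have hgCb : MemCb g := ⟨hgc, |g x₀| + 1, hgB⟩
  -- Lipschitz contraction along multiples of N
  have hLipk : ∀ k : ℕ, ∀ u v, |(ruelle p f)^[N*k] g u - (ruelle p f)^[N*k] g v|
      ≤ θ ^ k * dbar Cf α u v := by
    intro k
    induction k with
    | zero => intro u v; simpa using hg u v
    | succ k ih =>
      intro u v
      have hrw : N * (k+1) = N + N * k := by ring
      rw [hrw, Function.iterate_add_apply]
      have hkey := St18.key p hfc hMf hnormalized hCf hα0 hdist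
        (St18.memCb_iter p hfc hMf hnormalized hgCb (N*k)) (pow_nonneg hθ0.le k) ih N u v
      refine hkey.trans ?_
      have hd0 : 0 ≤ dX u v := St18.dX_nonneg u v
      have ht0 : 0 ≤ dX u v ^ α := Real.rpow_nonneg hd0 α
      have ht1 : dX u v ^ α ≤ 1 := Real.rpow_le_one hd0 (St18.dX_le_one u v) hα0.le
      have harith := St18.arith (q := q ^ N) (t := dX u v ^ α) hCf hqN0 hq1 hq2 ht0 ht1
      rw [St18.rpow_split N hd0, dbar]
      calc θ^k * min 1 (4*Cf*((((1:ℝ)/2) ^ α)^N * dX u v ^ α))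
            + (θ^k/2) * min (2*(Cf/(1+Cf))) (Cf * dX u v ^ α)
          = θ^k * (min 1 (4*Cf*((((1:ℝ)/2) ^ α)^N * dX u v ^ α))
            + (1/2) * min (2*(Cf/(1+Cf))) (Cf * dX u v ^ α)) := by ring
        _ ≤ θ^k * (max (1/4 : ℝ) ((1 + Cf/(1+Cf))/2) * min 1 (4*Cf* dX u v ^ α)) := by
            refine mul_le_mul_of_nonneg_left ?_ (pow_nonneg hθ0.le k)
            have hmm : 4*Cf*((((1:ℝ)/2) ^ α)^N * dX u v ^ α) = 4*Cf*(q^N * dX u v ^ α) := by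
              rw [hqdef]
            rw [hmm]
            exact harith
        _ = θ^(k+1) * min 1 (4*Cf* dX u v ^ α) := by
            rw [hθdef, hγdef]
            ring
  -- oscillation bound for every iterate
  have hosc : ∀ (m : ℕ) (u v : ℕ → E),
      |(ruelle p f)^[m] g u - (ruelle p f)^[m] g v| ≤ 2 * θ ^ (m / N) := by
    intro m u v
    have hd : (ruelle p f)^[m] g = (ruelle p f)^[m % N] ((ruelle p f)^[N * (m / N)] g) := by
      conv_lhs => rw [← Nat.mod_add_div m N]
      rw [Function.iterate_add_apply]
    rw [hd]
    have hkey := St18.key p hfc hMf hnormalized hCf hα0 hdist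
      (St18.memCb_iter p hfc hMf hnormalized hgCb (N * (m / N))) (pow_nonneg hθ0.le _)
      (hLipk (m / N)) (m % N) u v
    refine hkey.trans ?_
    have hp : (0:ℝ) ≤ θ ^ (m / N) := pow_nonneg hθ0.le _
    have e1 : min 1 (4*Cf*((((1:ℝ)/2))^(m % N) * dX u v) ^ α) ≤ 1 := min_le_left _ _
    have e2 : min (2*(Cf/(1+Cf))) (Cf * dX u v ^ α) ≤ 2*(Cf/(1+Cf)) := min_le_left _ _
    have e3 := mul_le_mul_of_nonneg_left e1 hp
    have e4 := mul_le_mul_of_nonneg_left e2 (by positivity : (0:ℝ) ≤ θ ^ (m / N) / 2)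
    have e5 : θ ^ (m / N) / 2 * (2*(Cf/(1+Cf))) = θ ^ (m / N) * (Cf/(1+Cf)) := by ring
    have e6 : θ ^ (m / N) * (Cf/(1+Cf)) ≤ θ ^ (m / N) * 1 := by
      refine mul_le_mul_of_nonneg_left ?_ hp
      rw [← hγdef]; linarith
    rw [e5] at e4
    rw [mul_one] at e3 e6
    linarith
  -- invariance of ν under the iterates
  have hνint : ∀ m : ℕ, (∫ u, (ruelle p f)^[m] g u ∂ν) = ∫ u, g u ∂ν := by
    intro m
    induction m with
    | zero => simp
    | succ m ih =>
      rw [Function.iterate_succ_apply',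
        hconf _ (St18.memCb_iter p hfc hMf hnormalized hgCb m), ih]
  -- each integral is close to the value at a point
  obtain ⟨hφc, Mφ, hMφ⟩ := St18.memCb_iter p hfc hMf hnormalized hgCb n
  have hclose : ∀ (m : Measure (ℕ → E)) [IsProbabilityMeasure m],
      |(∫ u, (ruelle p f)^[n] g u ∂m) - (ruelle p f)^[n] g x₀| ≤ 2 * θ ^ (n / N) := by
    intro m hm
    have hintg : Integrable ((ruelle p f)^[n] g) m :=
      St18.integrable_of_bdd hφc.aestronglyMeasurable Mφ hMφ
    have h1 : (∫ u, (ruelle p f)^[n] g u ∂m) - (ruelle p f)^[n] g x₀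
        = ∫ u, ((ruelle p f)^[n] g u - (ruelle p f)^[n] g x₀) ∂m := by
      rw [integral_sub hintg (integrable_const _), integral_const]
      simp
    rw [h1]
    calc |∫ u, ((ruelle p f)^[n] g u - (ruelle p f)^[n] g x₀) ∂m|
        ≤ ∫ u, |(ruelle p f)^[n] g u - (ruelle p f)^[n] g x₀| ∂m :=
          norm_integral_le_integral_norm
            (fun u => (ruelle p f)^[n] g u - (ruelle p f)^[n] g x₀) (μ := m)
      _ ≤ ∫ _u, (2 * θ ^ (n / N)) ∂m := by
          refine integral_mono (hintg.sub (integrable_const _)).abs (integrable_const _) ?_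
          intro u
          exact hosc n u x₀
      _ = 2 * θ ^ (n / N) := by rw [integral_const]; simp
  have hμc := hclose μ
  have hνc := hclose ν
  have hfinal : |(∫ u, (ruelle p f)^[n] g u ∂μ) - ∫ u, g u ∂ν| ≤ 4 * θ ^ (n / N) := by
    rw [← hνint n]
    have htri := abs_sub_le (∫ u, (ruelle p f)^[n] g u ∂μ) ((ruelle p f)^[n] g x₀)
      (∫ u, (ruelle p f)^[n] g u ∂ν)
    have h2 : |(ruelle p f)^[n] g x₀ - ∫ u, (ruelle p f)^[n] g u ∂ν| ≤ 2 * θ ^ (n / N) := by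
      rw [abs_sub_comm]; exact hνc
    linarith
  refine hfinal.trans ?_
  -- rate conversion: 4 θ^(n/N) ≤ (4/θ) s^n
  have hsn : s ^ n = θ ^ ((N:ℝ)⁻¹ * (n:ℝ)) := by
    rw [hsdef, ← Real.rpow_natCast (θ ^ ((N:ℝ)⁻¹)) n, ← Real.rpow_mul hθ0.le]
  have hexp : (N:ℝ)⁻¹ * (n:ℝ) ≤ ((n / N : ℕ) : ℝ) + 1 := by
    have h3 : n < N * (n / N) + N := by
      have e := Nat.div_add_mod n N
      have e2 : n % N < N := Nat.mod_lt n hN0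
      omega
    have h5 : (n:ℝ) < (N:ℝ) * ((n / N : ℕ) : ℝ) + (N:ℝ) := by exact_mod_cast h3
    have h4 : (n:ℝ) ≤ (N:ℝ) * (((n / N : ℕ) : ℝ) + 1) := by
      rw [mul_add, mul_one]
      exact h5.le
    rw [inv_mul_le_iff₀ hNR]
    exact h4
  have hmono : θ ^ (((n / N : ℕ) : ℝ) + 1) ≤ θ ^ ((N:ℝ)⁻¹ * (n:ℝ)) :=
    Real.rpow_le_rpow_of_exponent_ge hθ0 hθ1.le hexp
  have hnat : θ ^ (((n / N : ℕ) : ℝ) + 1) = θ ^ (n / N) * θ := by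
    rw [Real.rpow_add hθ0, Real.rpow_one, Real.rpow_natCast]
  calc 4 * θ ^ (n / N) = (4/θ) * (θ ^ (n / N) * θ) := by
        field_simp
    _ ≤ (4/θ) * θ ^ ((N:ℝ)⁻¹ * (n:ℝ)) := by
        refine mul_le_mul_of_nonneg_left ?_ (by positivity)
        rw [← hnat]
        exact hmono
    _ = (4/θ) * s ^ n := by rw [hsn]


end
end

section
/- Let f ∈ Hol(α) be a bounded α-Hölder normalized potential (L_f 1 = 1) that depends only on the first two coordinates, i.e. f(x) = F(x₁,x₂) for a function F:E×E→ℝ, and let ν be the unique Borel probability measure on X with L_f^*ν = ν. Define the transition kernel P(x₁,A) = ∫_E e^{F(a,x₁)}·1_A(a) dp(a) for x₁ ∈ E and Borel sets A ⊆ E. Then the pushforward π = ν∘π₁^{−1} of ν under the first-coordinate projection π₁:X→E is a stationary (invariant) measure for P: for every Borel set A ⊆ E, ∫_E P(x₁,A) dπ(x₁) = π(A). -/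
open MeasureTheory Filter Topology BoundedContinuousFunction

noncomputable section

variable {E : Type*} [MetricSpace E]

variable [MeasurableSpace E] [BorelSpace E]

/-- If the normalized bounded Hölder potential `f` depends only on
the first two coordinates, `f(x) = F(x₁,x₂)`, then the pushforward `π = ν ∘ π₁⁻¹` of
the conformal measure `ν` under the first-coordinate projection is stationary for the
transition kernel `P(x₁, A) = ∫_E e^{F(a,x₁)} 1_A(a) dp(a)`. -/
theorem statement19 {E : Type*} [MetricSpace E] [CompleteSpace E]
    [TopologicalSpace.SeparableSpace E] [MeasurableSpace E] [BorelSpace E] [Nonempty E]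
    (p : Measure E) [IsProbabilityMeasure p]
    (α : ℝ) (hα0 : 0 < α) (hα1 : α < 1)
    (F : E → E → ℝ) (f : (ℕ → E) → ℝ)
    (hfF : ∀ x : ℕ → E, f x = F (x 0) (x 1))
    (hf : MemHol α f)
    (hnormalized : ∀ x, ruelle p f (fun _ => 1) x = 1)
    (ν : Measure (ℕ → E)) (hν : IsProbabilityMeasure ν)
    (hconf : ∀ φ : (ℕ → E) → ℝ, MemCb φ → (∫ x, ruelle p f φ x ∂ν) = ∫ x, φ x ∂ν) :
    ∀ A : Set E, MeasurableSet A →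
      (∫ x₁, (∫ a, Real.exp (F a x₁) * A.indicator (fun _ => (1 : ℝ)) a ∂p)
          ∂(ν.map fun x => x 0)) = ((ν.map fun x => x 0) A).toReal := by
  classical
  haveI : SecondCountableTopology E := UniformSpace.secondCountable_of_separable E
  obtain ⟨hfc, ⟨M, hM⟩, -⟩ := hf
  -- continuity and boundedness of F
  have hconsCont : Continuous fun q : E × E => cons q.1 (fun _ => q.2) := by
    apply continuous_pi
    intro n
    cases n with
    | zero => exact continuous_fst
    | succ m => exact continuous_snd
  have hFeq : ∀ a b : E, F a b = f (cons a (fun _ => b)) := by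
    intro a b
    rw [hfF]
    rfl
  have hFcont : Continuous fun q : E × E => F q.1 q.2 := by
    have : (fun q : E × E => F q.1 q.2) = fun q : E × E => f (cons q.1 (fun _ => q.2)) := by
      funext q; exact hFeq q.1 q.2
    rw [this]
    exact hfc.comp hconsCont
  have hFbdd : ∀ a b : E, |F a b| ≤ M := fun a b => (hFeq a b) ▸ hM _
  have hFcont' : ∀ b : E, Continuous fun a : E => F a b := fun b =>
    hFcont.comp (continuous_id.prodMk continuous_const)
  have hexp_bdd : ∀ a b : E, Real.exp (F a b) ≤ Real.exp M := fun a b =>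
    Real.exp_le_exp.2 ((abs_le.1 (hFbdd a b)).2)
  set proj : (ℕ → E) → E := fun x => x 0 with hproj
  have hprojm : Measurable proj := measurable_pi_apply 0
  set π : Measure E := ν.map proj with hπ
  haveI : IsProbabilityMeasure π := Measure.isProbabilityMeasure_map hprojm.aemeasurable
  -- The key consequence of conformality: stationarity tested against bounded
  -- measurable (strongly measurable) g that is moreover continuous
  have key : ∀ (g : E → ℝ) (K : ℝ), Continuous g → (∀ a, |g a| ≤ K) →
      (∫ x₁, (∫ a, Real.exp (F a x₁) * g a ∂p) ∂π) = ∫ a, g a ∂π := by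
    intro g K hgc hgK
    have hφ : MemCb (fun x : ℕ → E => g (x 0)) :=
      ⟨hgc.comp (continuous_apply 0), ⟨K, fun x => hgK _⟩⟩
    have h1 := hconf _ hφ
    have h2 : ∀ x : ℕ → E, ruelle p f (fun y => g (y 0)) x
        = ∫ a, Real.exp (F a (x 0)) * g a ∂p := by
      intro x
      unfold ruelle
      refine integral_congr_ae (Filter.Eventually.of_forall fun a => ?_)
      show Real.exp (f (cons a x)) * g ((cons a x) 0) = Real.exp (F a (x 0)) * g a
      rw [hfF]
      rfl
    rw [show (fun x => ruelle p f (fun y => g (y 0)) x)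
        = fun x => ∫ a, Real.exp (F a (x 0)) * g a ∂p from funext h2] at h1
    -- push both sides through the map
    have hGm : StronglyMeasurable fun b : E => ∫ a, Real.exp (F a b) * g a ∂p := by
      apply StronglyMeasurable.integral_prod_right'
        (f := fun q : E × E => Real.exp (F q.2 q.1) * g q.2)
      exact (((hFcont.comp (continuous_swap)).rexp).mul (hgc.comp continuous_snd)).stronglyMeasurable
    rw [hπ, integral_map hprojm.aemeasurable (hGm.aestronglyMeasurable),
      integral_map hprojm.aemeasurable hgc.stronglyMeasurable.aestronglyMeasurable]
    exact h1
  -- the density and the candidate measure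
  set D : E × E → ENNReal := fun q => ENNReal.ofReal (Real.exp (F q.2 q.1)) with hD
  have hDm : Measurable D :=
    ((hFcont.comp continuous_swap).rexp).measurable.ennreal_ofReal
  set μ : Measure E := ((π.prod p).withDensity D).map Prod.snd with hμ
  -- lintegral of nonneg bounded measurable function against μ
  have hμ_lint : ∀ (g : E → ENNReal), Measurable g →
      ∫⁻ a, g a ∂μ = ∫⁻ x₁, ∫⁻ a, ENNReal.ofReal (Real.exp (F a x₁)) * g a ∂p ∂π := by
    intro g hg
    have hgsnd : Measurable fun q : E × E => g q.2 := hg.comp measurable_snd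
    rw [hμ, lintegral_map hg measurable_snd,
      lintegral_withDensity_eq_lintegral_mul _ hDm hgsnd]
    simp only [Pi.mul_apply]
    rw [lintegral_prod (fun q => D q * g q.2) ((hDm.mul hgsnd).aemeasurable)]
  haveI : IsFiniteMeasure μ := by
    constructor
    rw [hμ, Measure.map_apply measurable_snd MeasurableSet.univ, Set.preimage_univ,
      withDensity_apply _ MeasurableSet.univ, Measure.restrict_univ]
    calc ∫⁻ q, D q ∂(π.prod p) ≤ ∫⁻ _, ENNReal.ofReal (Real.exp M) ∂(π.prod p) := by
          refine lintegral_mono fun q => ?_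
          exact ENNReal.ofReal_le_ofReal (hexp_bdd _ _)
      _ < ⊤ := by simp
  -- conversion of inner integral to lintegral, for bounded measurable nonneg g
  have inner_conv : ∀ (g : E → ℝ) (K : ℝ) (x₁ : E), Measurable g → (∀ a, 0 ≤ g a) →
      (∀ a, g a ≤ K) →
      ∫⁻ a, ENNReal.ofReal (Real.exp (F a x₁)) * ENNReal.ofReal (g a) ∂p
        = ENNReal.ofReal (∫ a, Real.exp (F a x₁) * g a ∂p) := by
    intro g K x₁ hgm hg0 hgK
    have hintg : Integrable (fun a => Real.exp (F a x₁) * g a) p := by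
      refine ⟨(((hFcont' x₁).rexp).measurable.mul hgm).aestronglyMeasurable, ?_⟩
      apply HasFiniteIntegral.of_bounded (C := Real.exp M * |K|)
      refine Filter.Eventually.of_forall fun a => ?_
      rw [Real.norm_eq_abs, abs_mul, abs_of_pos (Real.exp_pos _)]
      refine mul_le_mul (hexp_bdd a x₁) ?_ (abs_nonneg _) (Real.exp_pos _).le
      rw [abs_of_nonneg (hg0 a)]
      exact (hgK a).trans (le_abs_self K)
    rw [ofReal_integral_eq_lintegral_ofReal hintg
      (Filter.Eventually.of_forall fun a => mul_nonneg (Real.exp_pos _).le (hg0 a))]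
    refine lintegral_congr fun a => ?_
    rw [ENNReal.ofReal_mul (Real.exp_pos _).le]
  -- boundedness of the middle integral as function of x₁
  have hGbound : ∀ (g : E → ℝ) (K : ℝ), (∀ a, |g a| ≤ K) → ∀ x₁,
      |∫ a, Real.exp (F a x₁) * g a ∂p| ≤ Real.exp M * K := by
    intro g K hgK x₁
    have := norm_integral_le_of_norm_le_const (μ := p)
      (f := fun a => Real.exp (F a x₁) * g a) (C := Real.exp M * K)
      (Filter.Eventually.of_forall fun a => by
        rw [Real.norm_eq_abs, abs_mul, abs_of_pos (Real.exp_pos _)]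
        exact mul_le_mul (hexp_bdd a x₁) (hgK a) (abs_nonneg _) (Real.exp_pos _).le)
    simpa using this
  have hGsm : ∀ (g : E → ℝ), Measurable g →
      StronglyMeasurable fun b : E => ∫ a, Real.exp (F a b) * g a ∂p := by
    intro g hgm
    apply StronglyMeasurable.integral_prod_right'
      (f := fun q : E × E => Real.exp (F q.2 q.1) * g q.2)
    exact (((hFcont.comp continuous_swap).rexp).measurable.mul
      (hgm.comp measurable_snd)).stronglyMeasurable
  -- The measures μ and π agree
  have hμπ : μ = π := by
    apply ext_of_forall_lintegral_eq_of_IsFiniteMeasure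
    intro g
    have hgm : Measurable fun a => (g a : ENNReal) := by
      exact_mod_cast g.continuous.measurable.coe_nnreal_ennreal
    have hgr : ∀ a, ((g a : NNReal) : ℝ) = (fun a => ((g a : NNReal) : ℝ)) a := fun _ => rfl
    set gr : E → ℝ := fun a => ((g a : NNReal) : ℝ) with hgrdef
    have hgrc : Continuous gr := NNReal.continuous_coe.comp g.continuous
    obtain ⟨K, hK⟩ : ∃ K : ℝ, ∀ a, gr a ≤ K := by
      obtain ⟨C, hC⟩ := g.bounded
      obtain ⟨a0⟩ := (inferInstance : Nonempty E)
      refine ⟨gr a0 + C, fun a => ?_⟩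
      have h1 : gr a - gr a0 ≤ dist (g a) (g a0) := by
        rw [NNReal.dist_eq]
        exact (le_abs_self _)
      have := hC a a0
      linarith
    have hgr0 : ∀ a, 0 ≤ gr a := fun a => (g a).coe_nonneg
    have hgrK : ∀ a, |gr a| ≤ K := fun a => by
      rw [abs_of_nonneg (hgr0 a)]; exact hK a
    have hcoe : ∀ a, (g a : ENNReal) = ENNReal.ofReal (gr a) := fun a => by
      simp [hgrdef, ENNReal.ofReal_coe_nnreal]
    rw [hμ_lint _ hgm]
    -- inner conversion
    have step1 : ∀ x₁, ∫⁻ a, ENNReal.ofReal (Real.exp (F a x₁)) * (g a : ENNReal) ∂p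
        = ENNReal.ofReal (∫ a, Real.exp (F a x₁) * gr a ∂p) := by
      intro x₁
      rw [← inner_conv gr K x₁ hgrc.measurable hgr0 hK]
      exact lintegral_congr fun a => by rw [hcoe]
    rw [lintegral_congr step1]
    set G : E → ℝ := fun x₁ => ∫ a, Real.exp (F a x₁) * gr a ∂p with hGdef
    have hGint : Integrable G π := by
      refine ⟨(hGsm gr hgrc.measurable).aestronglyMeasurable, ?_⟩
      apply HasFiniteIntegral.of_bounded (C := Real.exp M * K)
      exact Filter.Eventually.of_forall fun x₁ => by
        rw [Real.norm_eq_abs]; exact hGbound gr K hgrK x₁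
    have hG0 : ∀ x₁, 0 ≤ G x₁ := fun x₁ =>
      integral_nonneg fun a => mul_nonneg (Real.exp_pos _).le (hgr0 a)
    rw [← ofReal_integral_eq_lintegral_ofReal hGint (Filter.Eventually.of_forall hG0),
      key gr K hgrc hgrK,
      ofReal_integral_eq_lintegral_ofReal
        (by
          refine ⟨hgrc.measurable.aestronglyMeasurable, ?_⟩
          apply HasFiniteIntegral.of_bounded (C := K)
          exact Filter.Eventually.of_forall fun a => by rw [Real.norm_eq_abs]; exact hgrK a)
        (Filter.Eventually.of_forall hgr0)]
    exact lintegral_congr fun a => (hcoe a).symm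
  -- now the conclusion for the indicator of A
  intro A hA
  set g : E → ℝ := A.indicator fun _ => (1 : ℝ) with hg
  have hgm : Measurable g := measurable_const.indicator hA
  have hg0 : ∀ a, 0 ≤ g a := fun a => Set.indicator_nonneg (fun _ _ => zero_le_one) a
  have hgK : ∀ a, g a ≤ 1 := fun a => Set.indicator_le_self' (fun _ _ => zero_le_one) a
  have hgabs : ∀ a, |g a| ≤ 1 := fun a => by
    rw [abs_of_nonneg (hg0 a)]; exact hgK a
  set H : E → ℝ := fun x₁ => ∫ a, Real.exp (F a x₁) * g a ∂p with hH
  have hHint : Integrable H π := by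
    refine ⟨(hGsm g hgm).aestronglyMeasurable, ?_⟩
    apply HasFiniteIntegral.of_bounded (C := Real.exp M * 1)
    exact Filter.Eventually.of_forall fun x₁ => by
      rw [Real.norm_eq_abs]; exact hGbound g 1 hgabs x₁
  have hH0 : ∀ x₁, 0 ≤ H x₁ := fun x₁ =>
    integral_nonneg fun a => mul_nonneg (Real.exp_pos _).le (hg0 a)
  have hofReal : ENNReal.ofReal (∫ x₁, H x₁ ∂π) = μ A := by
    rw [ofReal_integral_eq_lintegral_ofReal hHint (Filter.Eventually.of_forall hH0)]
    have : ∀ x₁, ENNReal.ofReal (H x₁)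
        = ∫⁻ a, ENNReal.ofReal (Real.exp (F a x₁)) * ENNReal.ofReal (g a) ∂p := fun x₁ =>
      (inner_conv g 1 x₁ hgm hg0 hgK).symm
    rw [lintegral_congr this, ← hμ_lint (fun a => ENNReal.ofReal (g a))
      (hgm.ennreal_ofReal)]
    have hind : (fun a => ENNReal.ofReal (g a)) = A.indicator fun _ => (1 : ENNReal) := by
      funext a
      by_cases ha : a ∈ A <;> simp [hg, ha]
    rw [hind, lintegral_indicator hA, setLIntegral_one]
  have hπA : π A = μ A := by rw [hμπ]
  rw [hπA, ← hofReal, ENNReal.toReal_ofReal (integral_nonneg hH0)]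

end
end
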